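/- The pinned configuration space C_{v₄,v₁}(H★,h) — the space of maps p : {v₁,…,v₇} → ℝ² with p(v₄)=(0,0), p(v₁)=(√3,0), dist(p₁,p₄)=dist(p₂,p₄)=dist(p₃,p₄)=√3 and dist(p₁,p₅)=dist(p₁,p₆)=dist(p₂,p₅)=dist(p₂,p₇)=dist(p₃,p₆)=dist(p₃,p₇)=3/2 — has exactly three connected components, while the pinned configuration space C_{v₄,v₁}(G★★,l) — the space of maps q : {v₁,…,v₈} → ℝ² satisfying the same constraints together with dist(q₂,q₈)=dist(q₃,q₈)=√2 — is nonempty and connected. -/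

import Mathlib

/-- The pinned configuration space `C_{v₄,v₁}(H★, h)`: maps
`p : {v₁,…,v₇} → ℝ²` (vertex `vᵢ` is index `i-1`) with `p(v₄) = (0,0)`,
`p(v₁) = (√3, 0)`, `dist(p₁,p₄) = dist(p₂,p₄) = dist(p₃,p₄) = √3` and
`dist(p₁,p₅) = dist(p₁,p₆) = dist(p₂,p₅) = dist(p₂,p₇) = dist(p₃,p₆)
 = dist(p₃,p₇) = 3/2`. -/
noncomputable def HstarPinnedConfig : Set (Fin 7 → EuclideanSpace ℝ (Fin 2)) :=
  {p | p 3 = 0 ∧ p 0 = ![Real.sqrt 3, 0] ∧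
    dist (p 0) (p 3) = Real.sqrt 3 ∧ dist (p 1) (p 3) = Real.sqrt 3 ∧
    dist (p 2) (p 3) = Real.sqrt 3 ∧
    dist (p 0) (p 4) = 3 / 2 ∧ dist (p 0) (p 5) = 3 / 2 ∧
    dist (p 1) (p 4) = 3 / 2 ∧ dist (p 1) (p 6) = 3 / 2 ∧
    dist (p 2) (p 5) = 3 / 2 ∧ dist (p 2) (p 6) = 3 / 2}

/-- The pinned configuration space `C_{v₄,v₁}(G★★, l)` where `G★★` is `H★`
with an extra vertex `v₈` (index `7`) and extra edges `v₂v₈, v₃v₈` of length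
`√2`. -/
noncomputable def GstarstarPinnedConfig :
    Set (Fin 8 → EuclideanSpace ℝ (Fin 2)) :=
  {q | q 3 = 0 ∧ q 0 = ![Real.sqrt 3, 0] ∧
    dist (q 0) (q 3) = Real.sqrt 3 ∧ dist (q 1) (q 3) = Real.sqrt 3 ∧
    dist (q 2) (q 3) = Real.sqrt 3 ∧
    dist (q 0) (q 4) = 3 / 2 ∧ dist (q 0) (q 5) = 3 / 2 ∧
    dist (q 1) (q 4) = 3 / 2 ∧ dist (q 1) (q 6) = 3 / 2 ∧
    dist (q 2) (q 5) = 3 / 2 ∧ dist (q 2) (q 6) = 3 / 2 ∧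
    dist (q 1) (q 7) = Real.sqrt 2 ∧ dist (q 2) (q 7) = Real.sqrt 2}

set_option maxHeartbeats 2000000
open Real Set

local notation "E2" => EuclideanSpace ℝ (Fin 2)

noncomputable def pt (x y : ℝ) : E2 := WithLp.toLp 2 ![x, y]
@[simp] lemma pt_zero (x y : ℝ) : pt x y 0 = x := rfl
@[simp] lemma pt_one (x y : ℝ) : pt x y 1 = y := rfl
lemma e2_ext {p : E2} {x y : ℝ} (h0 : p 0 = x) (h1 : p 1 = y) : p = pt x y := by
  ext i; fin_cases i
  · exact h0
  · exact h1
lemma dist_e2 (p q : E2) : dist p q = Real.sqrt ((p 0 - q 0)^2 + (p 1 - q 1)^2) := by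
  rw [EuclideanSpace.dist_eq]; congr 1
  simp [Fin.sum_univ_two, Real.dist_eq, sq_abs]
lemma dist_e2_eq_iff {p q : E2} {L : ℝ} (hL : 0 ≤ L) :
    dist p q = L ↔ (p 0 - q 0)^2 + (p 1 - q 1)^2 = L^2 := by
  rw [dist_e2]
  constructor
  · intro h
    have := congrArg (fun z => z^2) h
    simpa [Real.sq_sqrt (by positivity : (0:ℝ) ≤ (p 0 - q 0)^2 + (p 1 - q 1)^2)] using this
  · intro h; rw [h, Real.sqrt_sq hL]

noncomputable def cpt (θ : ℝ) : E2 := pt (Real.sqrt 3 * Real.cos θ) (Real.sqrt 3 * Real.sin θ)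
noncomputable def rad (L δ : ℝ) : ℝ := Real.sqrt (L^2 - 3 * Real.sin δ ^ 2)
noncomputable def apx (μ δ s L : ℝ) : E2 :=
  pt ((Real.sqrt 3 * Real.cos δ + s * rad L δ) * Real.cos μ)
     ((Real.sqrt 3 * Real.cos δ + s * rad L δ) * Real.sin μ)

lemma s3_sq : Real.sqrt 3 ^ 2 = 3 := Real.sq_sqrt (by norm_num)

lemma zero_pt : (0 : E2) = pt 0 0 := by
  ext i; fin_cases i <;> rfl

lemma cpt_zero : cpt 0 = pt (Real.sqrt 3) 0 := by
  unfold cpt; rw [Real.cos_zero, Real.sin_zero]; norm_num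

lemma dist_cpt_origin (θ : ℝ) : dist (cpt θ) 0 = Real.sqrt 3 := by
  rw [dist_e2_eq_iff (Real.sqrt_nonneg 3)]
  simp only [cpt, pt_zero, pt_one, zero_pt]
  nlinarith [s3_sq, Real.sin_sq_add_cos_sq θ]

lemma chord_sq (θ₁ θ₂ : ℝ) :
    dist (cpt θ₁) (cpt θ₂) ^ 2 = 12 * Real.sin ((θ₁ - θ₂)/2) ^ 2 := by
  obtain ⟨m, d, rfl, rfl⟩ : ∃ m d, θ₁ = m + d ∧ θ₂ = m - d :=
    ⟨(θ₁+θ₂)/2, (θ₁-θ₂)/2, by ring, by ring⟩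
  rw [show (m + d - (m - d))/2 = d by ring]
  rw [dist_e2, Real.sq_sqrt (by positivity)]
  simp only [cpt, pt_zero, pt_one]
  rw [Real.cos_add, Real.cos_sub, Real.sin_add, Real.sin_sub]
  linear_combination (4 * Real.sin d^2 * (Real.sin m^2 + Real.cos m^2)) * s3_sq
    + 12 * Real.sin d^2 * Real.sin_sq_add_cos_sq m

lemma dist_cpt_cpt {θ₁ θ₂ L : ℝ} (hL : 0 ≤ L) :
    dist (cpt θ₁) (cpt θ₂) = L ↔ 12 * Real.sin ((θ₁ - θ₂)/2) ^ 2 = L^2 := by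
  rw [← chord_sq θ₁ θ₂]
  constructor
  · intro h; rw [h]
  · intro h
    have h1 : dist (cpt θ₁) (cpt θ₂) = Real.sqrt (L^2) := by
      rw [← h, Real.sqrt_sq dist_nonneg]
    rwa [Real.sqrt_sq hL] at h1

lemma rad_sq {L δ : ℝ} (h : 3 * Real.sin δ ^2 ≤ L^2) : rad L δ ^ 2 = L^2 - 3 * Real.sin δ ^2 :=
  Real.sq_sqrt (by linarith)

lemma rad_nonneg (L δ : ℝ) : 0 ≤ rad L δ := Real.sqrt_nonneg _

lemma dist_apx_plus {μ δ s L : ℝ} (hL : 0 ≤ L) (hs : s^2 = 1) (h : 3 * Real.sin δ ^2 ≤ L^2) :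
    dist (apx μ δ s L) (cpt (μ + δ)) = L := by
  rw [dist_e2_eq_iff hL]
  simp only [apx, cpt, pt_zero, pt_one]
  rw [Real.cos_add, Real.sin_add]
  linear_combination ((Real.cos μ^2 + Real.sin μ^2) * rad L δ ^2) * hs
    + (Real.cos μ^2 + Real.sin μ^2) * rad_sq h
    + ((Real.cos μ^2 + Real.sin μ^2) * Real.sin δ^2) * s3_sq
    + L^2 * Real.sin_sq_add_cos_sq μ

lemma dist_apx_minus {μ δ s L : ℝ} (hL : 0 ≤ L) (hs : s^2 = 1) (h : 3 * Real.sin δ ^2 ≤ L^2) :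
    dist (apx μ δ s L) (cpt (μ - δ)) = L := by
  rw [dist_e2_eq_iff hL]
  simp only [apx, cpt, pt_zero, pt_one]
  rw [Real.cos_sub, Real.sin_sub]
  linear_combination ((Real.cos μ^2 + Real.sin μ^2) * rad L δ ^2) * hs
    + (Real.cos μ^2 + Real.sin μ^2) * rad_sq h
    + ((Real.cos μ^2 + Real.sin μ^2) * Real.sin δ^2) * s3_sq
    + L^2 * Real.sin_sq_add_cos_sq μ

-- classification of apex points
lemma apex_class {μ δ L : ℝ} {x : E2} (hL : 0 < L) (hδ : Real.sin δ ≠ 0)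
    (h1 : dist x (cpt (μ+δ)) = L) (h2 : dist x (cpt (μ-δ)) = L) :
    ∃ s : ℝ, s^2 = 1 ∧ x = apx μ δ s L := by
  rw [dist_e2_eq_iff hL.le] at h1 h2
  simp only [cpt, pt_zero, pt_one] at h1 h2
  rw [Real.cos_add, Real.sin_add] at h1
  rw [Real.cos_sub, Real.sin_sub] at h2
  set u := x 0 with hu
  set v := x 1 with hv
  -- orthogonality : u * sin μ = v * cos μ
  have key : Real.sin δ * (u * Real.sin μ - v * Real.cos μ) * (4 * Real.sqrt 3) = 0 := by
    nlinarith [h1, h2]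
  have hs3 : (0:ℝ) < Real.sqrt 3 := Real.sqrt_pos.2 (by norm_num)
  have horth : u * Real.sin μ - v * Real.cos μ = 0 := by
    rcases mul_eq_zero.1 key with h | h
    · rcases mul_eq_zero.1 h with h' | h'
      · exact absurd h' hδ
      · exact h'
    · nlinarith
  set w := u * Real.cos μ + v * Real.sin μ with hw
  have hupy : Real.sin μ ^2 + Real.cos μ ^2 = 1 := Real.sin_sq_add_cos_sq μ
  have hu' : u = w * Real.cos μ := by
    rw [hw]; linear_combination Real.sin μ * horth - u * hupy
  have hv' : v = w * Real.sin μ := by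
    rw [hw]; linear_combination (-Real.cos μ) * horth - v * hupy
  rw [hu', hv'] at h1
  -- quadratic for w
  have hq : (w - Real.sqrt 3 * Real.cos δ)^2 = L^2 - 3 * Real.sin δ^2 := by
    linear_combination h1 - ((w - Real.sqrt 3 * Real.cos δ)^2 + Real.sqrt 3 ^2 * Real.sin δ^2) * hupy - Real.sin δ^2 * s3_sq
  have hrad : rad L δ ^ 2 = L^2 - 3 * Real.sin δ^2 :=
    rad_sq (by nlinarith [sq_nonneg (w - Real.sqrt 3 * Real.cos δ)])
  have habs : |w - Real.sqrt 3 * Real.cos δ| = rad L δ := by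
    rw [← Real.sqrt_sq_eq_abs, hq, ← hrad, Real.sqrt_sq (rad_nonneg L δ)]
  rcases abs_eq (rad_nonneg L δ) |>.1 habs with h | h
  · refine ⟨1, by norm_num, e2_ext ?_ ?_⟩
    · simp only [apx, pt_zero]
      linear_combination hu' + Real.cos μ * h
    · simp only [apx, pt_one]
      linear_combination hv' + Real.sin μ * h
  · refine ⟨-1, by norm_num, e2_ext ?_ ?_⟩
    · simp only [apx, pt_zero]
      linear_combination hu' + Real.cos μ * h
    · simp only [apx, pt_one]
      linear_combination hv' + Real.sin μ * h

lemma cpt_inj {θ θ' : ℝ} (h : cpt θ = cpt θ') (hd : |θ - θ'| < 2*π) : θ = θ' := by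
  have h0 := congrArg (· 0) h
  have h1 := congrArg (· 1) h
  simp only [cpt, pt_zero, pt_one] at h0 h1
  have hs3 : (0:ℝ) < Real.sqrt 3 := Real.sqrt_pos.2 (by norm_num)
  have hc : Real.cos θ = Real.cos θ' := mul_left_cancel₀ (ne_of_gt hs3) h0
  have hs : Real.sin θ = Real.sin θ' := mul_left_cancel₀ (ne_of_gt hs3) h1
  have : Real.cos (θ - θ') = 1 := by
    rw [Real.cos_sub, hc, hs]
    nlinarith [Real.sin_sq_add_cos_sq θ']
  rcases Real.cos_eq_one_iff _ |>.1 this with ⟨n, hn⟩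
  have hπ : (0:ℝ) < π := Real.pi_pos
  have : |(n:ℝ)| * (2*π) < 2*π := by
    have h2 : |(n:ℝ) * (2*π)| < 2*π := by rw [hn]; exact hd
    rwa [abs_mul, abs_of_pos (by linarith : (0:ℝ) < 2*π)] at h2
  have hn0 : |(n:ℝ)| < 1 := by nlinarith
  have hn1 : |n| < 1 := by exact_mod_cast (by rwa [← Int.cast_abs] at hn0 : ((|n|:ℤ):ℝ) < 1)
  have hn2 : n = 0 := Int.abs_lt_one_iff.mp hn1
  rw [hn2] at hn
  simp at hn
  linarith


lemma sin_abs_eq {θ : ℝ} (h : |θ| ≤ π) : Real.sin |θ| = |Real.sin θ| := by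
  rcases le_or_gt 0 θ with h0 | h0
  · rw [abs_of_nonneg h0, abs_of_nonneg (Real.sin_nonneg_of_nonneg_of_le_pi h0 (by rwa [abs_of_nonneg h0] at h))]
  · rw [abs_of_neg h0, Real.sin_neg, abs_of_nonpos]
    exact Real.sin_nonpos_of_nonpos_of_neg_pi_le h0.le (by rw [abs_of_neg h0] at h; linarith)

lemma sin_ge_sin {a θ : ℝ} (h0 : 0 ≤ a) (h1 : a ≤ θ) (h2 : θ ≤ π - a) : Real.sin a ≤ Real.sin θ := by
  rcases le_or_gt θ (π/2) with h3 | h3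
  · exact Real.strictMonoOn_sin.monotoneOn ⟨by linarith [Real.pi_pos], by linarith⟩
      ⟨by linarith [Real.pi_pos], h3⟩ h1
  · rw [← Real.sin_pi_sub θ]
    exact Real.strictMonoOn_sin.monotoneOn ⟨by linarith [Real.pi_pos], by linarith⟩
      ⟨by linarith, by linarith⟩ (by linarith)

lemma sin_gt_sin {a θ : ℝ} (h0 : 0 ≤ a) (h1 : a < θ) (h2 : θ < π - a) : Real.sin a < Real.sin θ := by
  rcases le_or_gt θ (π/2) with h3 | h3
  · exact Real.strictMonoOn_sin ⟨by linarith [Real.pi_pos], by linarith⟩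
      ⟨by linarith [Real.pi_pos], h3⟩ h1
  · rw [← Real.sin_pi_sub θ]
    exact Real.strictMonoOn_sin ⟨by linarith [Real.pi_pos], by linarith⟩
      ⟨by linarith, by linarith⟩ (by linarith)

lemma sin_pi_div_three_sq : Real.sin (π/3) ^ 2 = 3 / 4 := by
  rw [Real.sin_pi_div_three, div_pow, Real.sq_sqrt (by norm_num : (0:ℝ) ≤ 3)]
  norm_num

lemma sin_sq_abs (x : ℝ) : Real.sin |x| ^ 2 = Real.sin x ^ 2 := by
  rcases le_or_gt 0 x with h | h
  · rw [abs_of_nonneg h]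
  · rw [abs_of_neg h, Real.sin_neg, neg_sq]

lemma angle_bound1 {x : ℝ} (h1 : |x| ≤ π/2) (h2 : Real.sin x ^2 ≤ 3/4) : |x| ≤ π/3 := by
  by_contra hc
  push_neg at hc
  have : Real.sin (π/3) < Real.sin |x| :=
    sin_gt_sin (by positivity) hc (by linarith [Real.pi_pos])
  have h3 : (0:ℝ) ≤ Real.sin (π/3) := Real.sin_nonneg_of_nonneg_of_le_pi (by positivity) (by linarith [Real.pi_pos])
  nlinarith [sin_pi_div_three_sq, sin_sq_abs x]

lemma angle_bound2 {x : ℝ} (h1 : |x| ≤ 2*π/3) (h2 : Real.sin x ^2 ≤ 3/4) :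
    |x| ≤ π/3 ∨ |x| = 2*π/3 := by
  rcases lt_or_eq_of_le h1 with h1' | h1'
  · left
    by_contra hc
    push_neg at hc
    have : Real.sin (π/3) < Real.sin |x| := sin_gt_sin (by positivity) hc (by linarith)
    have h3 : (0:ℝ) ≤ Real.sin (π/3) := Real.sin_nonneg_of_nonneg_of_le_pi (by positivity) (by linarith [Real.pi_pos])
    nlinarith [sin_pi_div_three_sq, sin_sq_abs x]
  · right; exact h1'

lemma angle_bound3 {x : ℝ} (h1 : |x| ≤ 2*π/3) (h2 : Real.sin x ^2 ≤ 2/3) : |x| ≤ π/3 := by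
  rcases angle_bound2 h1 (by linarith) with h | h
  · exact h
  · exfalso
    have : Real.sin |x| = Real.sin (π/3) := by
      rw [h]
      rw [show 2*π/3 = π - π/3 by ring, Real.sin_pi_sub]
    have h4 : Real.sin x ^2 = 3/4 := by rw [← sin_sq_abs x, this, sin_pi_div_three_sq]
    linarith

lemma sin_sq_scale {δ t : ℝ} (hδ : |δ| ≤ π/3) (ht0 : 0 ≤ t) (ht1 : t ≤ 1) :
    Real.sin (t*δ)^2 ≤ Real.sin δ ^2 := by
  have h1 : |t*δ| ≤ |δ| := by
    rw [abs_mul, abs_of_nonneg ht0]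
    nlinarith [abs_nonneg δ]
  have h2 : Real.sin |t*δ| ≤ Real.sin |δ| :=
    sin_ge_sin (abs_nonneg _) h1 (by linarith [Real.pi_pos])
  have h3 : (0:ℝ) ≤ Real.sin |t*δ| :=
    Real.sin_nonneg_of_nonneg_of_le_pi (abs_nonneg _) (by linarith [Real.pi_pos])
  nlinarith [sin_sq_abs (t*δ), sin_sq_abs δ]


lemma continuous_pt {f g : ℝ → ℝ} (hf : Continuous f) (hg : Continuous g) :
    Continuous (fun t => pt (f t) (g t)) := by
  apply (PiLp.continuous_toLp 2 _).comp
  apply continuous_pi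
  intro i
  fin_cases i
  · exact hf
  · exact hg

lemma joinedIn_of {X : Type*} [TopologicalSpace X] {S : Set X} {x y : X}
    (γ : ℝ → X) (hγ : Continuous γ) (h0 : γ 0 = x) (h1 : γ 1 = y)
    (hmem : ∀ t, t ∈ Set.Icc (0:ℝ) 1 → γ t ∈ S) : JoinedIn S x y := by
  refine ⟨⟨⟨fun t => γ t, hγ.comp continuous_subtype_val⟩, ?_, ?_⟩, ?_⟩
  · simpa using h0
  · simpa using h1
  · intro t
    exact hmem t t.2

lemma exists_angle {a b r : ℝ} (hr : 0 < r) (h : a^2 + b^2 = r^2) :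
    ∃ φ, |φ| ≤ π ∧ a = r * Real.cos φ ∧ b = r * Real.sin φ := by
  have ha : |a / r| ≤ 1 := by
    rw [abs_div, abs_of_pos hr, div_le_one hr]
    nlinarith [sq_abs a, abs_nonneg a]
  have ha1 : -1 ≤ a / r := by cases' abs_le.1 ha with h1 h2; linarith
  have ha2 : a / r ≤ 1 := (abs_le.1 ha).2
  have hcos : Real.cos (Real.arccos (a / r)) = a / r := Real.cos_arccos ha1 ha2
  have hsin : Real.sin (Real.arccos (a / r)) = Real.sqrt (1 - (a/r)^2) := Real.sin_arccos _
  have hs : Real.sqrt (1 - (a/r)^2) = |b| / r := by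
    rw [show 1 - (a/r)^2 = (|b|/r)^2 by
      rw [div_pow, div_pow, sq_abs]
      field_simp
      nlinarith]
    exact Real.sqrt_sq (by positivity)
  rcases le_or_gt 0 b with hb | hb
  · refine ⟨Real.arccos (a / r), ?_, ?_, ?_⟩
    · rw [abs_of_nonneg (Real.arccos_nonneg _)]; exact Real.arccos_le_pi _
    · rw [hcos]; field_simp
    · rw [hsin, hs, abs_of_nonneg hb]; field_simp
  · refine ⟨-Real.arccos (a / r), ?_, ?_, ?_⟩
    · rw [abs_neg, abs_of_nonneg (Real.arccos_nonneg _)]; exact Real.arccos_le_pi _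
    · rw [Real.cos_neg, hcos]; field_simp
    · rw [Real.sin_neg, hsin, hs, abs_of_neg hb]; field_simp

/-! ### Configuration spaces -/

noncomputable def cfg (α β s₄ s₅ s₆ : ℝ) : Fin 7 → E2 :=
  ![cpt 0, cpt α, cpt β, pt 0 0,
    apx (α/2) (α/2) s₄ (3/2), apx (β/2) (β/2) s₅ (3/2), apx ((α+β)/2) ((α-β)/2) s₆ (3/2)]

@[simp] lemma cfg_0 (α β a b c : ℝ) : cfg α β a b c 0 = cpt 0 := rfl
@[simp] lemma cfg_1 (α β a b c : ℝ) : cfg α β a b c 1 = cpt α := rfl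
@[simp] lemma cfg_2 (α β a b c : ℝ) : cfg α β a b c 2 = cpt β := rfl
@[simp] lemma cfg_3 (α β a b c : ℝ) : cfg α β a b c 3 = pt 0 0 := rfl
@[simp] lemma cfg_4 (α β a b c : ℝ) : cfg α β a b c 4 = apx (α/2) (α/2) a (3/2) := rfl
@[simp] lemma cfg_5 (α β a b c : ℝ) : cfg α β a b c 5 = apx (β/2) (β/2) b (3/2) := rfl
@[simp] lemma cfg_6 (α β a b c : ℝ) : cfg α β a b c 6 = apx ((α+β)/2) ((α-β)/2) c (3/2) := rfl

lemma dist_cpt_pt00 (θ : ℝ) : dist (cpt θ) (pt 0 0) = Real.sqrt 3 := by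
  rw [← zero_pt]; exact dist_cpt_origin θ

lemma cfg_mem {α β s₄ s₅ s₆ : ℝ} (hs4 : s₄^2 = 1) (hs5 : s₅^2 = 1) (hs6 : s₆^2 = 1)
    (h1 : Real.sin (α/2)^2 ≤ 3/4) (h2 : Real.sin (β/2)^2 ≤ 3/4)
    (h3 : Real.sin ((α-β)/2)^2 ≤ 3/4) :
    cfg α β s₄ s₅ s₆ ∈ HstarPinnedConfig := by
  have hL : (0:ℝ) ≤ 3/2 := by norm_num
  refine ⟨zero_pt.symm, ?_, ?_, ?_, ?_, ?_, ?_, ?_, ?_, ?_, ?_⟩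
  · show (cpt 0).ofLp = _
    rw [cpt_zero]; rfl
  · exact dist_cpt_pt00 0
  · exact dist_cpt_pt00 α
  · exact dist_cpt_pt00 β
  · show dist (cpt 0) (apx (α/2) (α/2) s₄ (3/2)) = 3/2
    rw [dist_comm]
    have := dist_apx_minus (μ := α/2) (δ := α/2) hL hs4 (by nlinarith)
    rwa [show α/2 - α/2 = 0 by ring] at this
  · show dist (cpt 0) (apx (β/2) (β/2) s₅ (3/2)) = 3/2
    rw [dist_comm]
    have := dist_apx_minus (μ := β/2) (δ := β/2) hL hs5 (by nlinarith)
    rwa [show β/2 - β/2 = 0 by ring] at this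
  · show dist (cpt α) (apx (α/2) (α/2) s₄ (3/2)) = 3/2
    rw [dist_comm]
    have := dist_apx_plus (μ := α/2) (δ := α/2) hL hs4 (by nlinarith)
    rwa [show α/2 + α/2 = α by ring] at this
  · show dist (cpt α) (apx ((α+β)/2) ((α-β)/2) s₆ (3/2)) = 3/2
    rw [dist_comm]
    have := dist_apx_plus (μ := (α+β)/2) (δ := (α-β)/2) hL hs6 (by nlinarith)
    rwa [show (α+β)/2 + (α-β)/2 = α by ring] at this
  · show dist (cpt β) (apx (β/2) (β/2) s₅ (3/2)) = 3/2
    rw [dist_comm]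
    have := dist_apx_plus (μ := β/2) (δ := β/2) hL hs5 (by nlinarith)
    rwa [show β/2 + β/2 = β by ring] at this
  · show dist (cpt β) (apx ((α+β)/2) ((α-β)/2) s₆ (3/2)) = 3/2
    rw [dist_comm]
    have := dist_apx_minus (μ := (α+β)/2) (δ := (α-β)/2) hL hs6 (by nlinarith)
    rwa [show (α+β)/2 - (α-β)/2 = β by ring] at this

noncomputable def Pplus : Fin 7 → E2 :=
  ![pt (Real.sqrt 3) 0, pt (-(Real.sqrt 3)/2) (3/2), pt (-(Real.sqrt 3)/2) (-(3/2)),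
    pt 0 0, pt (Real.sqrt 3/4) (3/4), pt (Real.sqrt 3/4) (-(3/4)), pt (-(Real.sqrt 3)/2) 0]

noncomputable def Pminus : Fin 7 → E2 :=
  ![pt (Real.sqrt 3) 0, pt (-(Real.sqrt 3)/2) (-(3/2)), pt (-(Real.sqrt 3)/2) (3/2),
    pt 0 0, pt (Real.sqrt 3/4) (-(3/4)), pt (Real.sqrt 3/4) (3/4), pt (-(Real.sqrt 3)/2) 0]

lemma cpt_plus : cpt (2*π/3) = pt (-(Real.sqrt 3)/2) (3/2) := by
  have hc : Real.cos (2*π/3) = -(1/2) := by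
    rw [show 2*π/3 = π - π/3 by ring, Real.cos_pi_sub, Real.cos_pi_div_three]
  have hs : Real.sin (2*π/3) = Real.sqrt 3 / 2 := by
    rw [show 2*π/3 = π - π/3 by ring, Real.sin_pi_sub, Real.sin_pi_div_three]
  unfold cpt
  rw [hc, hs]
  refine e2_ext ?_ ?_ |>.symm |>.symm
  · simp; ring
  · simp
    linear_combination (1/2) * s3_sq

lemma cpt_minus : cpt (-(2*π/3)) = pt (-(Real.sqrt 3)/2) (-(3/2)) := by
  have hc : Real.cos (2*π/3) = -(1/2) := by
    rw [show 2*π/3 = π - π/3 by ring, Real.cos_pi_sub, Real.cos_pi_div_three]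
  have hs : Real.sin (2*π/3) = Real.sqrt 3 / 2 := by
    rw [show 2*π/3 = π - π/3 by ring, Real.sin_pi_sub, Real.sin_pi_div_three]
  unfold cpt
  rw [Real.cos_neg, Real.sin_neg, hc, hs]
  refine e2_ext ?_ ?_
  · show Real.sqrt 3 * -(1/2) = -(Real.sqrt 3)/2
    ring
  · show Real.sqrt 3 * -(Real.sqrt 3/2) = -(3/2)
    linear_combination (-(1/2)) * s3_sq

lemma midpoint_force {a b x : E2} (hab : dist a b = 3) (h1 : dist x a = 3/2) (h2 : dist x b = 3/2) :
    x = pt ((a 0 + b 0)/2) ((a 1 + b 1)/2) := by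
  rw [dist_e2_eq_iff (by norm_num : (0:ℝ) ≤ 3)] at hab
  rw [dist_e2_eq_iff (by norm_num : (0:ℝ) ≤ 3/2)] at h1 h2
  have key : (x 0 - (a 0 + b 0)/2)^2 + (x 1 - (a 1 + b 1)/2)^2 = 0 := by
    linear_combination h1/2 + h2/2 - hab/4
  have e0 : x 0 - (a 0 + b 0)/2 = 0 := by
    nlinarith [sq_nonneg (x 0 - (a 0 + b 0)/2), sq_nonneg (x 1 - (a 1 + b 1)/2)]
  have e1 : x 1 - (a 1 + b 1)/2 = 0 := by
    nlinarith [sq_nonneg (x 0 - (a 0 + b 0)/2), sq_nonneg (x 1 - (a 1 + b 1)/2)]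
  exact e2_ext (by linarith) (by linarith)

lemma sin_corner_sq : Real.sin (2*π/3) ^ 2 = 3/4 := by
  rw [show 2*π/3 = π - π/3 by ring, Real.sin_pi_sub]
  exact sin_pi_div_three_sq

lemma corner_force_plus {q : Fin 7 → E2} (hq : q ∈ HstarPinnedConfig)
    (h1 : q 1 = cpt (2*π/3)) (h2 : q 2 = cpt (-(2*π/3))) : q = Pplus := by
  obtain ⟨c1, c2, c3, c4, c5, c6, c7, c8, c9, c10, c11⟩ := hq
  have hq0 : q 0 = pt (Real.sqrt 3) 0 := congrArg (WithLp.toLp 2) c2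
  have hq1 : q 1 = pt (-(Real.sqrt 3)/2) (3/2) := by rw [h1, cpt_plus]
  have hq2 : q 2 = pt (-(Real.sqrt 3)/2) (-(3/2)) := by rw [h2, cpt_minus]
  have hq0' : q 0 = cpt 0 := by rw [hq0, ← cpt_zero]
  -- the three chords have length 3
  have ch01 : dist (q 0) (q 1) = 3 := by
    rw [hq0', h1, dist_cpt_cpt (by norm_num : (0:ℝ) ≤ 3)]
    rw [show (0 - 2*π/3)/2 = -(π/3) by ring, Real.sin_neg, neg_sq, sin_pi_div_three_sq]
    norm_num
  have ch02 : dist (q 0) (q 2) = 3 := by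
    rw [hq0', h2, dist_cpt_cpt (by norm_num : (0:ℝ) ≤ 3)]
    rw [show (0 - -(2*π/3))/2 = π/3 by ring, sin_pi_div_three_sq]
    norm_num
  have ch12 : dist (q 1) (q 2) = 3 := by
    rw [h1, h2, dist_cpt_cpt (by norm_num : (0:ℝ) ≤ 3)]
    rw [show (2*π/3 - -(2*π/3))/2 = 2*π/3 by ring, sin_corner_sq]
    norm_num
  -- apexes are midpoints
  have hq4 : q 4 = pt (Real.sqrt 3/4) (3/4) := by
    have := midpoint_force ch01 (by rw [dist_comm]; exact c6) (by rw [dist_comm]; exact c8)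
    rw [hq0, hq1] at this
    simp only [pt_zero, pt_one] at this
    rw [this]
    rw [show (Real.sqrt 3 + -(Real.sqrt 3)/2)/2 = Real.sqrt 3/4 by ring,
        show ((0:ℝ) + 3/2)/2 = 3/4 by ring]
  have hq5 : q 5 = pt (Real.sqrt 3/4) (-(3/4)) := by
    have := midpoint_force ch02 (by rw [dist_comm]; exact c7) (by rw [dist_comm]; exact c10)
    rw [hq0, hq2] at this
    simp only [pt_zero, pt_one] at this
    rw [this]
    rw [show (Real.sqrt 3 + -(Real.sqrt 3)/2)/2 = Real.sqrt 3/4 by ring,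
        show ((0:ℝ) + -(3/2))/2 = -(3/4) by ring]
  have hq6 : q 6 = pt (-(Real.sqrt 3)/2) 0 := by
    have := midpoint_force ch12 (by rw [dist_comm]; exact c9) (by rw [dist_comm]; exact c11)
    rw [hq1, hq2] at this
    simp only [pt_zero, pt_one] at this
    rw [this]
    rw [show (-(Real.sqrt 3)/2 + -(Real.sqrt 3)/2)/2 = -(Real.sqrt 3)/2 by ring,
        show ((3:ℝ)/2 + -(3/2))/2 = 0 by ring]
  funext i
  fin_cases i
  · exact hq0
  · exact hq1
  · exact hq2
  · exact c1.trans zero_pt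
  · exact hq4
  · exact hq5
  · exact hq6

lemma corner_force_minus {q : Fin 7 → E2} (hq : q ∈ HstarPinnedConfig)
    (h1 : q 1 = cpt (-(2*π/3))) (h2 : q 2 = cpt (2*π/3)) : q = Pminus := by
  obtain ⟨c1, c2, c3, c4, c5, c6, c7, c8, c9, c10, c11⟩ := hq
  have hq0 : q 0 = pt (Real.sqrt 3) 0 := congrArg (WithLp.toLp 2) c2
  have hq1 : q 1 = pt (-(Real.sqrt 3)/2) (-(3/2)) := by rw [h1, cpt_minus]
  have hq2 : q 2 = pt (-(Real.sqrt 3)/2) (3/2) := by rw [h2, cpt_plus]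
  have hq0' : q 0 = cpt 0 := by rw [hq0, ← cpt_zero]
  have ch01 : dist (q 0) (q 1) = 3 := by
    rw [hq0', h1, dist_cpt_cpt (by norm_num : (0:ℝ) ≤ 3)]
    rw [show (0 - -(2*π/3))/2 = π/3 by ring, sin_pi_div_three_sq]
    norm_num
  have ch02 : dist (q 0) (q 2) = 3 := by
    rw [hq0', h2, dist_cpt_cpt (by norm_num : (0:ℝ) ≤ 3)]
    rw [show (0 - 2*π/3)/2 = -(π/3) by ring, Real.sin_neg, neg_sq, sin_pi_div_three_sq]
    norm_num
  have ch12 : dist (q 1) (q 2) = 3 := by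
    rw [h1, h2, dist_cpt_cpt (by norm_num : (0:ℝ) ≤ 3)]
    rw [show (-(2*π/3) - 2*π/3)/2 = -(2*π/3) by ring, Real.sin_neg, neg_sq, sin_corner_sq]
    norm_num
  have hq4 : q 4 = pt (Real.sqrt 3/4) (-(3/4)) := by
    have := midpoint_force ch01 (by rw [dist_comm]; exact c6) (by rw [dist_comm]; exact c8)
    rw [hq0, hq1] at this
    simp only [pt_zero, pt_one] at this
    rw [this]
    rw [show (Real.sqrt 3 + -(Real.sqrt 3)/2)/2 = Real.sqrt 3/4 by ring,
        show ((0:ℝ) + -(3/2))/2 = -(3/4) by ring]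
  have hq5 : q 5 = pt (Real.sqrt 3/4) (3/4) := by
    have := midpoint_force ch02 (by rw [dist_comm]; exact c7) (by rw [dist_comm]; exact c10)
    rw [hq0, hq2] at this
    simp only [pt_zero, pt_one] at this
    rw [this]
    rw [show (Real.sqrt 3 + -(Real.sqrt 3)/2)/2 = Real.sqrt 3/4 by ring,
        show ((0:ℝ) + 3/2)/2 = 3/4 by ring]
  have hq6 : q 6 = pt (-(Real.sqrt 3)/2) 0 := by
    have := midpoint_force ch12 (by rw [dist_comm]; exact c9) (by rw [dist_comm]; exact c11)
    rw [hq1, hq2] at this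
    simp only [pt_zero, pt_one] at this
    rw [this]
    rw [show (-(Real.sqrt 3)/2 + -(Real.sqrt 3)/2)/2 = -(Real.sqrt 3)/2 by ring,
        show (-(3/2) + (3:ℝ)/2)/2 = 0 by ring]
  funext i
  fin_cases i
  · exact hq0
  · exact hq1
  · exact hq2
  · exact c1.trans zero_pt
  · exact hq4
  · exact hq5
  · exact hq6

lemma Pplus_mem : Pplus ∈ HstarPinnedConfig := by
  have h1 : Real.sin ((2*π/3)/2)^2 ≤ 3/4 := by
    rw [show (2*π/3)/2 = π/3 by ring, sin_pi_div_three_sq]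
  have h2 : Real.sin ((-(2*π/3))/2)^2 ≤ 3/4 := by
    rw [show (-(2*π/3))/2 = -(π/3) by ring, Real.sin_neg, neg_sq, sin_pi_div_three_sq]
  have h3 : Real.sin ((2*π/3 - -(2*π/3))/2)^2 ≤ 3/4 := by
    rw [show (2*π/3 - -(2*π/3))/2 = 2*π/3 by ring, sin_corner_sq]
  have h := cfg_mem (α := 2*π/3) (β := -(2*π/3)) (s₄ := 1) (s₅ := 1) (s₆ := 1)
    (by norm_num) (by norm_num) (by norm_num) h1 h2 h3
  have he := corner_force_plus h rfl rfl
  rwa [he] at h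

lemma Pminus_mem : Pminus ∈ HstarPinnedConfig := by
  have h1 : Real.sin ((-(2*π/3))/2)^2 ≤ 3/4 := by
    rw [show (-(2*π/3))/2 = -(π/3) by ring, Real.sin_neg, neg_sq, sin_pi_div_three_sq]
  have h2 : Real.sin ((2*π/3)/2)^2 ≤ 3/4 := by
    rw [show (2*π/3)/2 = π/3 by ring, sin_pi_div_three_sq]
  have h3 : Real.sin ((-(2*π/3) - 2*π/3)/2)^2 ≤ 3/4 := by
    rw [show (-(2*π/3) - 2*π/3)/2 = -(2*π/3) by ring, Real.sin_neg, neg_sq, sin_corner_sq]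
  have h := cfg_mem (α := -(2*π/3)) (β := 2*π/3) (s₄ := 1) (s₅ := 1) (s₆ := 1)
    (by norm_num) (by norm_num) (by norm_num) h1 h2 h3
  have he := corner_force_minus h rfl rfl
  rwa [he] at h

lemma ne_corner {q : Fin 7 → E2} {α β : ℝ} (h1 : q 1 = cpt α) (h2 : q 2 = cpt β)
    (hα : |α| ≤ 2*π/3) (hβ : |β| ≤ 2*π/3) (hd : |α - β| ≤ 2*π/3) :
    q ∉ ({Pplus, Pminus} : Set (Fin 7 → E2)) := by
  intro hmem
  have hπ := Real.pi_pos
  have hα' := abs_le.1 hα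
  have hβ' := abs_le.1 hβ
  have hd' := abs_le.1 hd
  rcases hmem with h | h
  · have e1 : cpt α = cpt (2*π/3) := by
      rw [← h1, h]; exact cpt_plus.symm ▸ rfl
    have e2 : cpt β = cpt (-(2*π/3)) := by
      rw [← h2, h]; exact cpt_minus.symm ▸ rfl
    have a1 : α = 2*π/3 := cpt_inj e1 (abs_lt.2 ⟨by linarith, by linarith⟩)
    have a2 : β = -(2*π/3) := cpt_inj e2 (abs_lt.2 ⟨by linarith, by linarith⟩)
    rw [a1, a2] at hd'
    linarith [hd'.2]
  · have e1 : cpt α = cpt (-(2*π/3)) := by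
      rw [← h1, h]; exact cpt_minus.symm ▸ rfl
    have e2 : cpt β = cpt (2*π/3) := by
      rw [← h2, h]; exact cpt_plus.symm ▸ rfl
    have a1 : α = -(2*π/3) := cpt_inj e1 (abs_lt.2 ⟨by linarith, by linarith⟩)
    have a2 : β = 2*π/3 := cpt_inj e2 (abs_lt.2 ⟨by linarith, by linarith⟩)
    rw [a1, a2] at hd'
    linarith [hd'.1]

lemma circle_path {c x y : E2} {L : ℝ} (hx : dist x c = L) (hy : dist y c = L) :
    ∃ γ : ℝ → E2, Continuous γ ∧ γ 0 = x ∧ γ 1 = y ∧ ∀ t, dist (γ t) c = L := by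
  have hL : 0 ≤ L := hx ▸ dist_nonneg
  rcases eq_or_lt_of_le hL with h0 | h0
  · have hx' : x = c := by rw [← dist_eq_zero, hx, ← h0]
    have hy' : y = c := by rw [← dist_eq_zero, hy, ← h0]
    exact ⟨fun _ => c, continuous_const, hx'.symm, hy'.symm,
      fun t => by rw [dist_self, ← h0]⟩
  · rw [dist_e2_eq_iff hL] at hx hy
    obtain ⟨φ₀, _, hx0, hx1⟩ := exists_angle h0 hx
    obtain ⟨φ₁, _, hy0, hy1⟩ := exists_angle h0 hy
    refine ⟨fun t => pt (c 0 + L * Real.cos ((1-t)*φ₀ + t*φ₁))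
                       (c 1 + L * Real.sin ((1-t)*φ₀ + t*φ₁)), ?_, ?_, ?_, ?_⟩
    · apply continuous_pt <;> fun_prop
    · show pt (c 0 + L * Real.cos ((1-(0:ℝ))*φ₀ + 0*φ₁)) (c 1 + L * Real.sin ((1-(0:ℝ))*φ₀ + 0*φ₁)) = x
      rw [show (1-(0:ℝ))*φ₀ + 0*φ₁ = φ₀ by ring]
      exact (e2_ext (by linarith) (by linarith)).symm
    · show pt (c 0 + L * Real.cos ((1-(1:ℝ))*φ₀ + 1*φ₁)) (c 1 + L * Real.sin ((1-(1:ℝ))*φ₀ + 1*φ₁)) = y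
      rw [show (1-(1:ℝ))*φ₀ + 1*φ₁ = φ₁ by ring]
      exact (e2_ext (by linarith) (by linarith)).symm
    · intro t
      rw [dist_e2_eq_iff hL]
      simp only [pt_zero, pt_one]
      linear_combination L^2 * Real.sin_sq_add_cos_sq ((1-t)*φ₀ + t*φ₁)

lemma joinedIn_update {n : ℕ} {S : Set (Fin n → E2)} {p : Fin n → E2} {i : Fin n} {γ : ℝ → E2}
    (hγ : Continuous γ) (h0 : γ 0 = p i)
    (hmem : ∀ t ∈ Set.Icc (0:ℝ) 1, Function.update p i (γ t) ∈ S) :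
    JoinedIn S p (Function.update p i (γ 1)) := by
  apply joinedIn_of (fun t => Function.update p i (γ t)) ?_ ?_ rfl hmem
  · apply continuous_pi
    intro j
    simp only [Function.update_apply]
    by_cases hj : j = i
    · simpa [hj] using hγ
    · simp only [hj, if_false]
      exact continuous_const
  · show Function.update p i (γ 0) = p
    rw [h0, Function.update_eq_self]

lemma update_apex4_mem {q : Fin 7 → E2} (hq : q ∈ HstarPinnedConfig) {x : E2}
    (h0 : dist (q 0) x = 3/2) (h1 : dist (q 1) x = 3/2) :
    Function.update q 4 x ∈ HstarPinnedConfig := by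
  obtain ⟨c1, c2, c3, c4, c5, c6, c7, c8, c9, c10, c11⟩ := hq
  refine ⟨?_, ?_, ?_, ?_, ?_, ?_, ?_, ?_, ?_, ?_, ?_⟩ <;>
    simp only [Function.update_self, Function.update_of_ne (by decide : (3:Fin 7) ≠ 4),
      Function.update_of_ne (by decide : (0:Fin 7) ≠ 4),
      Function.update_of_ne (by decide : (1:Fin 7) ≠ 4),
      Function.update_of_ne (by decide : (2:Fin 7) ≠ 4),
      Function.update_of_ne (by decide : (5:Fin 7) ≠ 4),
      Function.update_of_ne (by decide : (6:Fin 7) ≠ 4)] <;>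
    assumption

lemma update_apex5_mem {q : Fin 7 → E2} (hq : q ∈ HstarPinnedConfig) {x : E2}
    (h0 : dist (q 0) x = 3/2) (h1 : dist (q 2) x = 3/2) :
    Function.update q 5 x ∈ HstarPinnedConfig := by
  obtain ⟨c1, c2, c3, c4, c5, c6, c7, c8, c9, c10, c11⟩ := hq
  refine ⟨?_, ?_, ?_, ?_, ?_, ?_, ?_, ?_, ?_, ?_, ?_⟩ <;>
    simp only [Function.update_self, Function.update_of_ne (by decide : (3:Fin 7) ≠ 5),
      Function.update_of_ne (by decide : (0:Fin 7) ≠ 5),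
      Function.update_of_ne (by decide : (1:Fin 7) ≠ 5),
      Function.update_of_ne (by decide : (2:Fin 7) ≠ 5),
      Function.update_of_ne (by decide : (4:Fin 7) ≠ 5),
      Function.update_of_ne (by decide : (6:Fin 7) ≠ 5)] <;>
    assumption

lemma update_apex6_mem {q : Fin 7 → E2} (hq : q ∈ HstarPinnedConfig) {x : E2}
    (h0 : dist (q 1) x = 3/2) (h1 : dist (q 2) x = 3/2) :
    Function.update q 6 x ∈ HstarPinnedConfig := by
  obtain ⟨c1, c2, c3, c4, c5, c6, c7, c8, c9, c10, c11⟩ := hq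
  refine ⟨?_, ?_, ?_, ?_, ?_, ?_, ?_, ?_, ?_, ?_, ?_⟩ <;>
    simp only [Function.update_self, Function.update_of_ne (by decide : (3:Fin 7) ≠ 6),
      Function.update_of_ne (by decide : (0:Fin 7) ≠ 6),
      Function.update_of_ne (by decide : (1:Fin 7) ≠ 6),
      Function.update_of_ne (by decide : (2:Fin 7) ≠ 6),
      Function.update_of_ne (by decide : (4:Fin 7) ≠ 6),
      Function.update_of_ne (by decide : (5:Fin 7) ≠ 6)] <;>
    assumption

noncomputable def Scomp : Set (Fin 7 → E2) := HstarPinnedConfig \ {Pplus, Pminus}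

lemma rotate4 {q : Fin 7 → E2} (hq : q ∈ HstarPinnedConfig) {x : E2} (hc : q 0 = q 1)
    (hx : dist (q 0) x = 3/2)
    (hNC : ∀ q' : Fin 7 → E2, q' 1 = q 1 → q' 2 = q 2 → q' ∉ ({Pplus, Pminus} : Set (Fin 7 → E2))) :
    JoinedIn Scomp q (Function.update q 4 x) := by
  have h04 : dist (q 4) (q 0) = 3/2 := by rw [dist_comm]; exact hq.2.2.2.2.2.1
  obtain ⟨γ, hγc, hγ0, hγ1, hγd⟩ := circle_path h04 (show dist x (q 0) = 3/2 by rw [dist_comm]; exact hx)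
  have hj := joinedIn_update (S := Scomp) (p := q) (i := 4) hγc hγ0 (fun t _ => by
    refine ⟨update_apex4_mem hq ?_ ?_, hNC _ ?_ ?_⟩
    · rw [dist_comm]; exact hγd t
    · rw [← hc, dist_comm]; exact hγd t
    · rw [Function.update_of_ne (by decide : (1:Fin 7) ≠ 4)]
    · rw [Function.update_of_ne (by decide : (2:Fin 7) ≠ 4)])
  rwa [hγ1] at hj

lemma rotate5 {q : Fin 7 → E2} (hq : q ∈ HstarPinnedConfig) {x : E2} (hc : q 0 = q 2)
    (hx : dist (q 0) x = 3/2)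
    (hNC : ∀ q' : Fin 7 → E2, q' 1 = q 1 → q' 2 = q 2 → q' ∉ ({Pplus, Pminus} : Set (Fin 7 → E2))) :
    JoinedIn Scomp q (Function.update q 5 x) := by
  have h05 : dist (q 5) (q 0) = 3/2 := by rw [dist_comm]; exact hq.2.2.2.2.2.2.1
  obtain ⟨γ, hγc, hγ0, hγ1, hγd⟩ := circle_path h05 (show dist x (q 0) = 3/2 by rw [dist_comm]; exact hx)
  have hj := joinedIn_update (S := Scomp) (p := q) (i := 5) hγc hγ0 (fun t _ => by
    refine ⟨update_apex5_mem hq ?_ ?_, hNC _ ?_ ?_⟩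
    · rw [dist_comm]; exact hγd t
    · rw [← hc, dist_comm]; exact hγd t
    · rw [Function.update_of_ne (by decide : (1:Fin 7) ≠ 5)]
    · rw [Function.update_of_ne (by decide : (2:Fin 7) ≠ 5)])
  rwa [hγ1] at hj

lemma rotate6 {q : Fin 7 → E2} (hq : q ∈ HstarPinnedConfig) {x : E2} (hc : q 1 = q 2)
    (hx : dist (q 1) x = 3/2)
    (hNC : ∀ q' : Fin 7 → E2, q' 1 = q 1 → q' 2 = q 2 → q' ∉ ({Pplus, Pminus} : Set (Fin 7 → E2))) :
    JoinedIn Scomp q (Function.update q 6 x) := by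
  have h16 : dist (q 6) (q 1) = 3/2 := by rw [dist_comm]; exact hq.2.2.2.2.2.2.2.2.1
  obtain ⟨γ, hγc, hγ0, hγ1, hγd⟩ := circle_path h16 (show dist x (q 1) = 3/2 by rw [dist_comm]; exact hx)
  have hj := joinedIn_update (S := Scomp) (p := q) (i := 6) hγc hγ0 (fun t _ => by
    refine ⟨update_apex6_mem hq ?_ ?_, hNC _ ?_ ?_⟩
    · rw [dist_comm]; exact hγd t
    · rw [← hc, dist_comm]; exact hγd t
    · rw [Function.update_of_ne (by decide : (1:Fin 7) ≠ 6)]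
    · rw [Function.update_of_ne (by decide : (2:Fin 7) ≠ 6)])
  rwa [hγ1] at hj

lemma continuous_cpt {f : ℝ → ℝ} (hf : Continuous f) :
    Continuous fun t => cpt (f t) := by
  unfold cpt
  exact continuous_pt (by fun_prop) (by fun_prop)

lemma continuous_apx {f g : ℝ → ℝ} (hf : Continuous f) (hg : Continuous g) (s L : ℝ) :
    Continuous fun t => apx (f t) (g t) s L := by
  unfold apx rad
  exact continuous_pt (by fun_prop) (by fun_prop)

lemma sin_sq_le_of_le {x : ℝ} (h : |x| ≤ π/3) : Real.sin x ^ 2 ≤ 3/4 := by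
  have hπ := Real.pi_pos
  have h1 : Real.sin |x| ≤ Real.sin (π/3) := sin_ge_sin (abs_nonneg x) h (by linarith)
  have h2 : (0:ℝ) ≤ Real.sin |x| :=
    Real.sin_nonneg_of_nonneg_of_le_pi (abs_nonneg x) (by linarith)
  nlinarith [sin_pi_div_three_sq, sin_sq_abs x]

lemma abshalf {x : ℝ} (h : |x/2| ≤ π/3) : |x| ≤ 2*π/3 := by
  rw [abs_div, show |(2:ℝ)| = 2 by norm_num] at h
  linarith

lemma stageB {α β s₄ s₅ s₆ : ℝ} (hs4 : s₄^2 = 1) (hs5 : s₅^2 = 1) (hs6 : s₆^2 = 1)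
    (hα2 : |α/2| ≤ π/3) (hβ2 : |β/2| ≤ π/3) (hδ2 : |(α-β)/2| ≤ π/3) :
    JoinedIn Scomp (cfg α β s₄ s₅ s₆) (cfg 0 0 s₄ s₅ s₆) := by
  have hαb := abshalf hα2
  have hβb := abshalf hβ2
  have hdb := abshalf hδ2
  apply joinedIn_of (fun t => cfg ((1-t)*α) ((1-t)*β) s₄ s₅ s₆)
  · apply continuous_pi
    intro j
    fin_cases j
    · exact continuous_const
    · exact continuous_cpt (by fun_prop)
    · exact continuous_cpt (by fun_prop)
    · exact continuous_const
    · exact continuous_apx (by fun_prop) (by fun_prop) _ _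
    · exact continuous_apx (by fun_prop) (by fun_prop) _ _
    · exact continuous_apx (by fun_prop) (by fun_prop) _ _
  · show cfg ((1-(0:ℝ))*α) ((1-(0:ℝ))*β) s₄ s₅ s₆ = cfg α β s₄ s₅ s₆
    rw [show (1-(0:ℝ))*α = α by ring, show (1-(0:ℝ))*β = β by ring]
  · show cfg ((1-(1:ℝ))*α) ((1-(1:ℝ))*β) s₄ s₅ s₆ = cfg 0 0 s₄ s₅ s₆
    rw [show (1-(1:ℝ))*α = 0 by ring, show (1-(1:ℝ))*β = 0 by ring]
  · intro t ht
    have h1t0 : (0:ℝ) ≤ 1 - t := by linarith [ht.2]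
    have h1t1 : (1:ℝ) - t ≤ 1 := by linarith [ht.1]
    have b1 : Real.sin (((1-t)*α)/2)^2 ≤ 3/4 := by
      rw [show ((1-t)*α)/2 = (1-t)*(α/2) by ring]
      exact le_trans (sin_sq_scale hα2 h1t0 h1t1) (sin_sq_le_of_le hα2)
    have b2 : Real.sin (((1-t)*β)/2)^2 ≤ 3/4 := by
      rw [show ((1-t)*β)/2 = (1-t)*(β/2) by ring]
      exact le_trans (sin_sq_scale hβ2 h1t0 h1t1) (sin_sq_le_of_le hβ2)
    have b3 : Real.sin (((1-t)*α - (1-t)*β)/2)^2 ≤ 3/4 := by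
      rw [show ((1-t)*α - (1-t)*β)/2 = (1-t)*((α-β)/2) by ring]
      exact le_trans (sin_sq_scale hδ2 h1t0 h1t1) (sin_sq_le_of_le hδ2)
    refine ⟨cfg_mem hs4 hs5 hs6 b1 b2 b3, ne_corner rfl rfl ?_ ?_ ?_⟩
    · rw [abs_mul]
      calc |1-t| * |α| ≤ 1 * |α| := by
            apply mul_le_mul_of_nonneg_right _ (abs_nonneg α)
            rw [abs_of_nonneg h1t0]; exact h1t1
        _ ≤ 2*π/3 := by rw [one_mul]; exact hαb
    · rw [abs_mul]
      calc |1-t| * |β| ≤ 1 * |β| := by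
            apply mul_le_mul_of_nonneg_right _ (abs_nonneg β)
            rw [abs_of_nonneg h1t0]; exact h1t1
        _ ≤ 2*π/3 := by rw [one_mul]; exact hβb
    · rw [show (1-t)*α - (1-t)*β = (1-t)*(α-β) by ring, abs_mul]
      calc |1-t| * |α-β| ≤ 1 * |α-β| := by
            apply mul_le_mul_of_nonneg_right _ (abs_nonneg (α-β))
            rw [abs_of_nonneg h1t0]; exact h1t1
        _ ≤ 2*π/3 := by rw [one_mul]; exact hdb

lemma stageC {s₄ s₅ s₆ : ℝ} (hs4 : s₄^2 = 1) (hs5 : s₅^2 = 1) (hs6 : s₆^2 = 1) :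
    JoinedIn Scomp (cfg 0 0 s₄ s₅ s₆) (cfg 0 0 1 1 1) := by
  have hπ := Real.pi_pos
  have L0 : (0:ℝ) ≤ 3/2 := by norm_num
  have bnd : Real.sin ((0:ℝ)/2)^2 ≤ 3/4 := by norm_num
  have bnd' : Real.sin (((0:ℝ)-0)/2)^2 ≤ 3/4 := by norm_num
  have mem : ∀ a b c : ℝ, a^2 = 1 → b^2 = 1 → c^2 = 1 →
      cfg 0 0 a b c ∈ HstarPinnedConfig := fun a b c ha hb hc =>
    cfg_mem ha hb hc bnd bnd bnd'
  have hNC0 : ∀ q' : Fin 7 → E2, q' 1 = cpt 0 → q' 2 = cpt 0 →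
      q' ∉ ({Pplus, Pminus} : Set (Fin 7 → E2)) := fun q' h1 h2 =>
    ne_corner h1 h2 (by simp; positivity) (by simp; positivity) (by simp; positivity)
  have hb0 : 3 * Real.sin ((0:ℝ)/2)^2 ≤ (3/2:ℝ)^2 := by norm_num
  have d1 : ∀ s : ℝ, s^2 = 1 → dist (apx ((0:ℝ)/2) ((0:ℝ)/2) s (3/2)) (cpt 0) = 3/2 := by
    intro s hs
    have := dist_apx_minus (μ := (0:ℝ)/2) (δ := (0:ℝ)/2) L0 hs hb0
    rwa [show (0:ℝ)/2 - 0/2 = 0 by norm_num] at this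
  have hb0' : 3 * Real.sin (((0:ℝ)-0)/2)^2 ≤ (3/2:ℝ)^2 := by norm_num
  have d2 : ∀ s : ℝ, s^2 = 1 → dist (apx (((0:ℝ)+0)/2) (((0:ℝ)-0)/2) s (3/2)) (cpt 0) = 3/2 := by
    intro s hs
    have := dist_apx_plus (μ := ((0:ℝ)+0)/2) (δ := ((0:ℝ)-0)/2) L0 hs hb0'
    rwa [show ((0:ℝ)+0)/2 + ((0:ℝ)-0)/2 = 0 by norm_num] at this
  have j1 : JoinedIn Scomp (cfg 0 0 s₄ s₅ s₆) (cfg 0 0 1 s₅ s₆) := by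
    have h := rotate4 (mem s₄ s₅ s₆ hs4 hs5 hs6) rfl
      (show dist (cfg 0 0 s₄ s₅ s₆ 0) (apx ((0:ℝ)/2) ((0:ℝ)/2) 1 (3/2)) = 3/2 by
        rw [cfg_0, dist_comm]; exact d1 1 (by norm_num))
      (fun q' h1 h2 => hNC0 q' h1 h2)
    rwa [show Function.update (cfg 0 0 s₄ s₅ s₆) 4 (apx ((0:ℝ)/2) ((0:ℝ)/2) 1 (3/2))
        = cfg 0 0 1 s₅ s₆ from by funext i; fin_cases i <;> rfl] at h
  have j2 : JoinedIn Scomp (cfg 0 0 1 s₅ s₆) (cfg 0 0 1 1 s₆) := by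
    have h := rotate5 (mem 1 s₅ s₆ (by norm_num) hs5 hs6) rfl
      (show dist (cfg 0 0 1 s₅ s₆ 0) (apx ((0:ℝ)/2) ((0:ℝ)/2) 1 (3/2)) = 3/2 by
        rw [cfg_0, dist_comm]; exact d1 1 (by norm_num))
      (fun q' h1 h2 => hNC0 q' h1 h2)
    rwa [show Function.update (cfg 0 0 1 s₅ s₆) 5 (apx ((0:ℝ)/2) ((0:ℝ)/2) 1 (3/2))
        = cfg 0 0 1 1 s₆ from by funext i; fin_cases i <;> rfl] at h
  have j3 : JoinedIn Scomp (cfg 0 0 1 1 s₆) (cfg 0 0 1 1 1) := by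
    have h := rotate6 (mem 1 1 s₆ (by norm_num) (by norm_num) hs6) rfl
      (show dist (cfg 0 0 1 1 s₆ 1) (apx (((0:ℝ)+0)/2) (((0:ℝ)-0)/2) 1 (3/2)) = 3/2 by
        rw [cfg_1, dist_comm]; exact d2 1 (by norm_num))
      (fun q' h1 h2 => hNC0 q' h1 h2)
    rwa [show Function.update (cfg 0 0 1 1 s₆) 6 (apx (((0:ℝ)+0)/2) (((0:ℝ)-0)/2) 1 (3/2))
        = cfg 0 0 1 1 1 from by funext i; fin_cases i <;> rfl] at h
  exact (j1.trans j2).trans j3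

set_option maxHeartbeats 2000000 in
lemma hstar_main {p : Fin 7 → E2} (hp : p ∈ HstarPinnedConfig) :
    p = Pplus ∨ p = Pminus ∨ JoinedIn Scomp p (cfg 0 0 1 1 1) := by
  have hπ := Real.pi_pos
  have L0 : (0:ℝ) ≤ 3/2 := by norm_num
  obtain ⟨c1, c2, c3, c4, c5, c6, c7, c8, c9, c10, c11⟩ := hp
  have hp' : p ∈ HstarPinnedConfig := ⟨c1, c2, c3, c4, c5, c6, c7, c8, c9, c10, c11⟩
  have hq0 : p 0 = cpt 0 := (congrArg (WithLp.toLp 2) c2).trans cpt_zero.symm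
  -- extract angles
  have h13 : (p 1 0)^2 + (p 1 1)^2 = Real.sqrt 3 ^2 := by
    have h := c4
    rw [c1, dist_e2_eq_iff (Real.sqrt_nonneg 3), zero_pt] at h
    simpa using h
  obtain ⟨α, hαπ, hα0, hα1⟩ := exists_angle (Real.sqrt_pos.2 (by norm_num)) h13
  have hp1 : p 1 = cpt α := e2_ext hα0 hα1
  have h23 : (p 2 0)^2 + (p 2 1)^2 = Real.sqrt 3 ^2 := by
    have h := c5
    rw [c1, dist_e2_eq_iff (Real.sqrt_nonneg 3), zero_pt] at h
    simpa using h
  obtain ⟨β, hβπ, hβ0, hβ1⟩ := exists_angle (Real.sqrt_pos.2 (by norm_num)) h23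
  have hp2 : p 2 = cpt β := e2_ext hβ0 hβ1
  -- chord bounds from the apex triangle inequalities
  have t1 : dist (p 0) (p 1) ≤ 3 := by
    calc dist (p 0) (p 1) ≤ dist (p 0) (p 4) + dist (p 4) (p 1) := dist_triangle _ _ _
      _ = 3 := by rw [c6, dist_comm, c8]; norm_num
  have t2 : dist (p 0) (p 2) ≤ 3 := by
    calc dist (p 0) (p 2) ≤ dist (p 0) (p 5) + dist (p 5) (p 2) := dist_triangle _ _ _
      _ = 3 := by rw [c7, dist_comm, c10]; norm_num
  have t3 : dist (p 1) (p 2) ≤ 3 := by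
    calc dist (p 1) (p 2) ≤ dist (p 1) (p 6) + dist (p 6) (p 2) := dist_triangle _ _ _
      _ = 3 := by rw [c9, dist_comm, c11]; norm_num
  have hsα : Real.sin (α/2)^2 ≤ 3/4 := by
    have hcs := chord_sq 0 α
    rw [← hq0, ← hp1, show (0 - α)/2 = -(α/2) by ring, Real.sin_neg, neg_sq] at hcs
    have hnn : (0:ℝ) ≤ dist (p 0) (p 1) := dist_nonneg
    generalize dist (p 0) (p 1) = D at t1 hcs hnn
    nlinarith
  have hsβ : Real.sin (β/2)^2 ≤ 3/4 := by
    have hcs := chord_sq 0 β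
    rw [← hq0, ← hp2, show (0 - β)/2 = -(β/2) by ring, Real.sin_neg, neg_sq] at hcs
    have hnn : (0:ℝ) ≤ dist (p 0) (p 2) := dist_nonneg
    generalize dist (p 0) (p 2) = D at t2 hcs hnn
    nlinarith
  have hsδ : Real.sin ((α-β)/2)^2 ≤ 3/4 := by
    have hcs := chord_sq α β
    rw [← hp1, ← hp2] at hcs
    have hnn : (0:ℝ) ≤ dist (p 1) (p 2) := dist_nonneg
    generalize dist (p 1) (p 2) = D at t3 hcs hnn
    nlinarith
  -- angle bounds
  have hα2 : |α/2| ≤ π/3 := by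
    apply angle_bound1 _ hsα
    rw [abs_div, show |(2:ℝ)| = 2 by norm_num]
    linarith
  have hβ2 : |β/2| ≤ π/3 := by
    apply angle_bound1 _ hsβ
    rw [abs_div, show |(2:ℝ)| = 2 by norm_num]
    linarith
  have hαb := abshalf hα2
  have hβb := abshalf hβ2
  have hδpre : |(α-β)/2| ≤ 2*π/3 := by
    rw [abs_div, show |(2:ℝ)| = 2 by norm_num]
    have habs : |α - β| ≤ |α| + |β| := by
      calc |α - β| = |α + -β| := by rw [sub_eq_add_neg]
        _ ≤ |α| + |-β| := abs_add_le _ _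
        _ = |α| + |β| := by rw [abs_neg]
    linarith
  rcases angle_bound2 hδpre hsδ with hsmall | hcorner
  · -- main component
    right; right
    have hdb := abshalf hsmall
    have hNC : ∀ q' : Fin 7 → E2, q' 1 = p 1 → q' 2 = p 2 →
        q' ∉ ({Pplus, Pminus} : Set (Fin 7 → E2)) := fun q' h1 h2 =>
      ne_corner (h1.trans hp1) (h2.trans hp2) hαb hβb hdb
    have hpS : p ∈ Scomp := ⟨hp', hNC p rfl rfl⟩
    -- distances to target apexes
    have hbα : 3 * Real.sin (α/2)^2 ≤ (3/2:ℝ)^2 := by nlinarith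
    have hbβ : 3 * Real.sin (β/2)^2 ≤ (3/2:ℝ)^2 := by nlinarith
    have hbδ : 3 * Real.sin ((α-β)/2)^2 ≤ (3/2:ℝ)^2 := by nlinarith
    have dA0 : ∀ s : ℝ, s^2 = 1 → dist (apx (α/2) (α/2) s (3/2)) (cpt 0) = 3/2 := by
      intro s hs
      have := dist_apx_minus (μ := α/2) (δ := α/2) L0 hs hbα
      rwa [show α/2 - α/2 = 0 by ring] at this
    have dAα : ∀ s : ℝ, s^2 = 1 → dist (apx (α/2) (α/2) s (3/2)) (cpt α) = 3/2 := by
      intro s hs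
      have := dist_apx_plus (μ := α/2) (δ := α/2) L0 hs hbα
      rwa [show α/2 + α/2 = α by ring] at this
    have dB0 : ∀ s : ℝ, s^2 = 1 → dist (apx (β/2) (β/2) s (3/2)) (cpt 0) = 3/2 := by
      intro s hs
      have := dist_apx_minus (μ := β/2) (δ := β/2) L0 hs hbβ
      rwa [show β/2 - β/2 = 0 by ring] at this
    have dBβ : ∀ s : ℝ, s^2 = 1 → dist (apx (β/2) (β/2) s (3/2)) (cpt β) = 3/2 := by
      intro s hs
      have := dist_apx_plus (μ := β/2) (δ := β/2) L0 hs hbβ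
      rwa [show β/2 + β/2 = β by ring] at this
    have dCα : ∀ s : ℝ, s^2 = 1 → dist (apx ((α+β)/2) ((α-β)/2) s (3/2)) (cpt α) = 3/2 := by
      intro s hs
      have := dist_apx_plus (μ := (α+β)/2) (δ := (α-β)/2) L0 hs hbδ
      rwa [show (α+β)/2 + (α-β)/2 = α by ring] at this
    have dCβ : ∀ s : ℝ, s^2 = 1 → dist (apx ((α+β)/2) ((α-β)/2) s (3/2)) (cpt β) = 3/2 := by
      intro s hs
      have := dist_apx_minus (μ := (α+β)/2) (δ := (α-β)/2) L0 hs hbδ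
      rwa [show (α+β)/2 - (α-β)/2 = β by ring] at this
    -- Step 4
    have step4 : ∃ s : ℝ, s^2 = 1 ∧
        JoinedIn Scomp p (Function.update p 4 (apx (α/2) (α/2) s (3/2))) := by
      by_cases hdeg : α = 0
      · refine ⟨1, by norm_num, rotate4 hp' ?_ ?_ hNC⟩
        · rw [hq0, hp1, hdeg]
        · rw [hq0, dist_comm]; exact dA0 1 (by norm_num)
      · have habs1 : 0 < |α/2| := abs_pos.2 (div_ne_zero hdeg two_ne_zero)
        have habs2 : |α/2| < π := lt_of_le_of_lt hα2 (by linarith)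
        have hsin : Real.sin (α/2) ≠ 0 := by
          have hpos := Real.sin_pos_of_pos_of_lt_pi habs1 habs2
          rw [sin_abs_eq habs2.le] at hpos
          intro hcon
          rw [hcon] at hpos
          simp at hpos
        obtain ⟨s, hs, hfix⟩ := apex_class (by norm_num : (0:ℝ) < 3/2) hsin
          (show dist (p 4) (cpt (α/2 + α/2)) = 3/2 by
            rw [show α/2 + α/2 = α by ring, ← hp1, dist_comm]; exact c8)
          (show dist (p 4) (cpt (α/2 - α/2)) = 3/2 by
            rw [show α/2 - α/2 = 0 by ring, ← hq0, dist_comm]; exact c6)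
        exact ⟨s, hs, by rw [← hfix, Function.update_eq_self]; exact JoinedIn.refl hpS⟩
    obtain ⟨s₄, hs4, hj4⟩ := step4
    set q4 : Fin 7 → E2 := Function.update p 4 (apx (α/2) (α/2) s₄ (3/2)) with hq4def
    have hq4_0 : q4 0 = p 0 := Function.update_of_ne (by decide) _ _
    have hq4_1 : q4 1 = p 1 := Function.update_of_ne (by decide) _ _
    have hq4_2 : q4 2 = p 2 := Function.update_of_ne (by decide) _ _
    have hq4_5 : q4 5 = p 5 := Function.update_of_ne (by decide) _ _
    have hq4_6 : q4 6 = p 6 := Function.update_of_ne (by decide) _ _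
    have hq4mem : q4 ∈ HstarPinnedConfig := update_apex4_mem hp'
      (by rw [hq0, dist_comm]; exact dA0 s₄ hs4) (by rw [hp1, dist_comm]; exact dAα s₄ hs4)
    -- Step 5
    have step5 : ∃ s : ℝ, s^2 = 1 ∧
        JoinedIn Scomp q4 (Function.update q4 5 (apx (β/2) (β/2) s (3/2))) := by
      by_cases hdeg : β = 0
      · refine ⟨1, by norm_num, rotate5 hq4mem ?_ ?_ ?_⟩
        · rw [hq4_0, hq4_2, hq0, hp2, hdeg]
        · rw [hq4_0, hq0, dist_comm]; exact dB0 1 (by norm_num)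
        · intro q' h1 h2
          exact hNC q' (h1.trans hq4_1) (h2.trans hq4_2)
      · have habs1 : 0 < |β/2| := abs_pos.2 (div_ne_zero hdeg two_ne_zero)
        have habs2 : |β/2| < π := lt_of_le_of_lt hβ2 (by linarith)
        have hsin : Real.sin (β/2) ≠ 0 := by
          have hpos := Real.sin_pos_of_pos_of_lt_pi habs1 habs2
          rw [sin_abs_eq habs2.le] at hpos
          intro hcon
          rw [hcon] at hpos
          simp at hpos
        obtain ⟨s, hs, hfix⟩ := apex_class (by norm_num : (0:ℝ) < 3/2) hsin
          (show dist (q4 5) (cpt (β/2 + β/2)) = 3/2 by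
            rw [show β/2 + β/2 = β by ring, hq4_5, ← hp2, dist_comm]; exact c10)
          (show dist (q4 5) (cpt (β/2 - β/2)) = 3/2 by
            rw [show β/2 - β/2 = 0 by ring, hq4_5, ← hq0, dist_comm]; exact c7)
        refine ⟨s, hs, ?_⟩
        rw [← hfix, Function.update_eq_self]
        exact JoinedIn.refl ⟨hq4mem, hNC q4 hq4_1 hq4_2⟩
    obtain ⟨s₅, hs5, hj5⟩ := step5
    set q5 : Fin 7 → E2 := Function.update q4 5 (apx (β/2) (β/2) s₅ (3/2)) with hq5def
    have hq5_0 : q5 0 = p 0 := by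
      rw [hq5def, Function.update_of_ne (by decide)]; exact hq4_0
    have hq5_1 : q5 1 = p 1 := by
      rw [hq5def, Function.update_of_ne (by decide)]; exact hq4_1
    have hq5_2 : q5 2 = p 2 := by
      rw [hq5def, Function.update_of_ne (by decide)]; exact hq4_2
    have hq5_4 : q5 4 = q4 4 := Function.update_of_ne (by decide) _ _
    have hq5_6 : q5 6 = p 6 := by
      rw [hq5def, Function.update_of_ne (by decide)]; exact hq4_6
    have hq5mem : q5 ∈ HstarPinnedConfig := update_apex5_mem hq4mem
      (by rw [hq4_0, hq0, dist_comm]; exact dB0 s₅ hs5)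
      (by rw [hq4_2, hp2, dist_comm]; exact dBβ s₅ hs5)
    -- Step 6
    have step6 : ∃ s : ℝ, s^2 = 1 ∧
        JoinedIn Scomp q5 (Function.update q5 6 (apx ((α+β)/2) ((α-β)/2) s (3/2))) := by
      by_cases hdeg : α = β
      · refine ⟨1, by norm_num, rotate6 hq5mem ?_ ?_ ?_⟩
        · rw [hq5_1, hq5_2, hp1, hp2, hdeg]
        · rw [hq5_1, hp1, dist_comm]; exact dCα 1 (by norm_num)
        · intro q' h1 h2
          exact hNC q' (h1.trans hq5_1) (h2.trans hq5_2)
      · have hαβ : α - β ≠ 0 := sub_ne_zero.2 hdeg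
        have habs1 : 0 < |(α-β)/2| := abs_pos.2 (div_ne_zero hαβ two_ne_zero)
        have habs2 : |(α-β)/2| < π := lt_of_le_of_lt hsmall (by linarith)
        have hsin : Real.sin ((α-β)/2) ≠ 0 := by
          have hpos := Real.sin_pos_of_pos_of_lt_pi habs1 habs2
          rw [sin_abs_eq habs2.le] at hpos
          intro hcon
          rw [hcon] at hpos
          simp at hpos
        obtain ⟨s, hs, hfix⟩ := apex_class (by norm_num : (0:ℝ) < 3/2) hsin
          (show dist (q5 6) (cpt ((α+β)/2 + (α-β)/2)) = 3/2 by
            rw [show (α+β)/2 + (α-β)/2 = α by ring, hq5_6, ← hp1, dist_comm]; exact c9)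
          (show dist (q5 6) (cpt ((α+β)/2 - (α-β)/2)) = 3/2 by
            rw [show (α+β)/2 - (α-β)/2 = β by ring, hq5_6, ← hp2, dist_comm]; exact c11)
        refine ⟨s, hs, ?_⟩
        rw [← hfix, Function.update_eq_self]
        exact JoinedIn.refl ⟨hq5mem, hNC q5 hq5_1 hq5_2⟩
    obtain ⟨s₆, hs6, hj6⟩ := step6
    set q6 : Fin 7 → E2 := Function.update q5 6 (apx ((α+β)/2) ((α-β)/2) s₆ (3/2)) with hq6def
    have hq6eq : q6 = cfg α β s₄ s₅ s₆ := by
      funext i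
      fin_cases i
      · show q6 0 = cpt 0
        rw [hq6def, Function.update_of_ne (by decide)]
        rw [hq5_0]; exact hq0
      · show q6 1 = cpt α
        rw [hq6def, Function.update_of_ne (by decide)]
        rw [hq5_1]; exact hp1
      · show q6 2 = cpt β
        rw [hq6def, Function.update_of_ne (by decide)]
        rw [hq5_2]; exact hp2
      · show q6 3 = pt 0 0
        rw [hq6def, Function.update_of_ne (by decide), hq5def,
          Function.update_of_ne (by decide), hq4def, Function.update_of_ne (by decide)]
        exact c1.trans zero_pt
      · show q6 4 = apx (α/2) (α/2) s₄ (3/2)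
        rw [hq6def, Function.update_of_ne (by decide), hq5_4, hq4def,
          Function.update_self]
      · show q6 5 = apx (β/2) (β/2) s₅ (3/2)
        rw [hq6def, Function.update_of_ne (by decide), hq5def, Function.update_self]
      · show q6 6 = apx ((α+β)/2) ((α-β)/2) s₆ (3/2)
        rw [hq6def, Function.update_self]
    have hchain : JoinedIn Scomp p (cfg α β s₄ s₅ s₆) := by
      rw [← hq6eq]
      exact (hj4.trans hj5).trans hj6
    exact (hchain.trans (stageB hs4 hs5 hs6 hα2 hβ2 hsmall)).trans (stageC hs4 hs5 hs6)
  · -- corner case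
    have h4 : |α - β| = 4*π/3 := by
      rw [abs_div, show |(2:ℝ)| = 2 by norm_num] at hcorner
      linarith
    have hαl := abs_le.1 hαb
    have hβl := abs_le.1 hβb
    rcases (abs_eq (by positivity : (0:ℝ) ≤ 4*π/3)).1 h4 with hpm | hpm
    · left
      have hαv : α = 2*π/3 := by linarith [hαl.2, hβl.1]
      have hβv : β = -(2*π/3) := by linarith [hαl.2, hβl.1]
      exact corner_force_plus hp' (by rw [hp1, hαv]) (by rw [hp2, hβv])
    · right; left
      have hαv : α = -(2*π/3) := by linarith [hαl.1, hβl.2]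
      have hβv : β = 2*π/3 := by linarith [hαl.1, hβl.2]
      exact corner_force_minus hp' (by rw [hp1, hαv]) (by rw [hp2, hβv])

lemma mem_angles {q : Fin 7 → E2} (hq : q ∈ HstarPinnedConfig) :
    ∃ α β : ℝ, q 1 = cpt α ∧ q 2 = cpt β ∧ |α| ≤ 2*π/3 ∧ |β| ≤ 2*π/3 ∧
      (|(α-β)/2| ≤ π/3 ∨ |(α-β)/2| = 2*π/3) := by
  have hπ := Real.pi_pos
  obtain ⟨c1, c2, c3, c4, c5, c6, c7, c8, c9, c10, c11⟩ := hq
  have hq0 : q 0 = cpt 0 := (congrArg (WithLp.toLp 2) c2).trans cpt_zero.symm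
  have h13 : (q 1 0)^2 + (q 1 1)^2 = Real.sqrt 3 ^2 := by
    have h := c4
    rw [c1, dist_e2_eq_iff (Real.sqrt_nonneg 3), zero_pt] at h
    simpa using h
  obtain ⟨α, hαπ, hα0, hα1⟩ := exists_angle (Real.sqrt_pos.2 (by norm_num)) h13
  have hp1 : q 1 = cpt α := e2_ext hα0 hα1
  have h23 : (q 2 0)^2 + (q 2 1)^2 = Real.sqrt 3 ^2 := by
    have h := c5
    rw [c1, dist_e2_eq_iff (Real.sqrt_nonneg 3), zero_pt] at h
    simpa using h
  obtain ⟨β, hβπ, hβ0, hβ1⟩ := exists_angle (Real.sqrt_pos.2 (by norm_num)) h23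
  have hp2 : q 2 = cpt β := e2_ext hβ0 hβ1
  have t1 : dist (q 0) (q 1) ≤ 3 := by
    calc dist (q 0) (q 1) ≤ dist (q 0) (q 4) + dist (q 4) (q 1) := dist_triangle _ _ _
      _ = 3 := by rw [c6, dist_comm, c8]; norm_num
  have t2 : dist (q 0) (q 2) ≤ 3 := by
    calc dist (q 0) (q 2) ≤ dist (q 0) (q 5) + dist (q 5) (q 2) := dist_triangle _ _ _
      _ = 3 := by rw [c7, dist_comm, c10]; norm_num
  have t3 : dist (q 1) (q 2) ≤ 3 := by
    calc dist (q 1) (q 2) ≤ dist (q 1) (q 6) + dist (q 6) (q 2) := dist_triangle _ _ _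
      _ = 3 := by rw [c9, dist_comm, c11]; norm_num
  have hsα : Real.sin (α/2)^2 ≤ 3/4 := by
    have hcs := chord_sq 0 α
    rw [← hq0, ← hp1, show (0 - α)/2 = -(α/2) by ring, Real.sin_neg, neg_sq] at hcs
    have hnn : (0:ℝ) ≤ dist (q 0) (q 1) := dist_nonneg
    generalize dist (q 0) (q 1) = D at t1 hcs hnn
    nlinarith
  have hsβ : Real.sin (β/2)^2 ≤ 3/4 := by
    have hcs := chord_sq 0 β
    rw [← hq0, ← hp2, show (0 - β)/2 = -(β/2) by ring, Real.sin_neg, neg_sq] at hcs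
    have hnn : (0:ℝ) ≤ dist (q 0) (q 2) := dist_nonneg
    generalize dist (q 0) (q 2) = D at t2 hcs hnn
    nlinarith
  have hsδ : Real.sin ((α-β)/2)^2 ≤ 3/4 := by
    have hcs := chord_sq α β
    rw [← hp1, ← hp2] at hcs
    have hnn : (0:ℝ) ≤ dist (q 1) (q 2) := dist_nonneg
    generalize dist (q 1) (q 2) = D at t3 hcs hnn
    nlinarith
  have hα2 : |α/2| ≤ π/3 := by
    apply angle_bound1 _ hsα
    rw [abs_div, show |(2:ℝ)| = 2 by norm_num]
    linarith
  have hβ2 : |β/2| ≤ π/3 := by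
    apply angle_bound1 _ hsβ
    rw [abs_div, show |(2:ℝ)| = 2 by norm_num]
    linarith
  have hαb := abshalf hα2
  have hβb := abshalf hβ2
  have hδpre : |(α-β)/2| ≤ 2*π/3 := by
    rw [abs_div, show |(2:ℝ)| = 2 by norm_num]
    have habs : |α - β| ≤ |α| + |β| := by
      calc |α - β| = |α + -β| := by rw [sub_eq_add_neg]
        _ ≤ |α| + |-β| := abs_add_le _ _
        _ = |α| + |β| := by rw [abs_neg]
    linarith
  exact ⟨α, β, hp1, hp2, hαb, hβb, angle_bound2 hδpre hsδ⟩

lemma close_angle {θ₀ θ₁ : ℝ} (h0 : |θ₀| ≤ 2*π/3) (h1 : |θ₁| ≤ 2*π/3)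
    (hd : dist (cpt θ₀) (cpt θ₁) < 1/10) : |θ₀ - θ₁| < 1/4 := by
  have hπ3 : (3:ℝ) < π := Real.pi_gt_three
  have hsq : 12 * Real.sin ((θ₀-θ₁)/2)^2 < 1/100 := by
    have hcs := chord_sq θ₀ θ₁
    have hnn : (0:ℝ) ≤ dist (cpt θ₀) (cpt θ₁) := dist_nonneg
    generalize dist (cpt θ₀) (cpt θ₁) = D at hd hcs hnn
    nlinarith
  by_contra hc
  push_neg at hc
  set x := (θ₀ - θ₁)/2 with hx
  have hxb : |x| ≤ 2*π/3 := by
    rw [hx, abs_div, show |(2:ℝ)| = 2 by norm_num]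
    have habs : |θ₀ - θ₁| ≤ |θ₀| + |θ₁| := by
      calc |θ₀ - θ₁| = |θ₀ + -θ₁| := by rw [sub_eq_add_neg]
        _ ≤ |θ₀| + |-θ₁| := abs_add_le _ _
        _ = |θ₀| + |θ₁| := by rw [abs_neg]
    linarith
  have hxge : 1/8 ≤ |x| := by
    rw [hx, abs_div, show |(2:ℝ)| = 2 by norm_num]
    linarith
  have hsin8 : (0.12:ℝ) < Real.sin (1/8) := by
    have := Real.sin_gt_sub_cube (by norm_num : (0:ℝ) < 1/8)
    nlinarith
  have hmono : Real.sin (1/8) ≤ Real.sin |x| :=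
    sin_ge_sin (by norm_num) hxge (by linarith)
  nlinarith [sin_sq_abs x, hsin8, hmono]

lemma isolated_plus {q : Fin 7 → E2} (hq : q ∈ HstarPinnedConfig)
    (hd : dist q Pplus < 1/10) : q = Pplus := by
  have hπ3 : (3:ℝ) < π := Real.pi_gt_three
  obtain ⟨α, β, h1, h2, hαb, hβb, hdich⟩ := mem_angles hq
  have hP1 : Pplus 1 = cpt (2*π/3) := cpt_plus.symm
  have hP2 : Pplus 2 = cpt (-(2*π/3)) := cpt_minus.symm
  have hd1 : dist (cpt α) (cpt (2*π/3)) < 1/10 := by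
    rw [← h1, ← hP1]
    exact lt_of_le_of_lt (dist_le_pi_dist q Pplus 1) hd
  have hd2 : dist (cpt β) (cpt (-(2*π/3))) < 1/10 := by
    rw [← h2, ← hP2]
    exact lt_of_le_of_lt (dist_le_pi_dist q Pplus 2) hd
  have ha : |α - 2*π/3| < 1/4 :=
    close_angle hαb (by rw [abs_of_pos (by positivity)]) hd1
  have hb : |β - -(2*π/3)| < 1/4 :=
    close_angle hβb (by rw [abs_neg, abs_of_pos (by positivity)]) hd2
  have ha' := abs_lt.1 ha
  have hb' := abs_lt.1 hb
  rcases hdich with hsmall | hcorner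
  · exfalso
    rw [abs_div, show |(2:ℝ)| = 2 by norm_num] at hsmall
    have : |α - β| ≤ 2*π/3 := by linarith
    have := abs_le.1 this
    linarith [this.2]
  · have h4 : |α - β| = 4*π/3 := by
      rw [abs_div, show |(2:ℝ)| = 2 by norm_num] at hcorner
      linarith
    rcases (abs_eq (by positivity : (0:ℝ) ≤ 4*π/3)).1 h4 with hpm | hpm
    · have hαl := abs_le.1 hαb
      have hβl := abs_le.1 hβb
      have hαv : α = 2*π/3 := by linarith [hαl.2, hβl.1]
      have hβv : β = -(2*π/3) := by linarith [hαl.2, hβl.1]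
      exact corner_force_plus hq (by rw [h1, hαv]) (by rw [h2, hβv])
    · exfalso
      linarith
lemma isolated_minus {q : Fin 7 → E2} (hq : q ∈ HstarPinnedConfig)
    (hd : dist q Pminus < 1/10) : q = Pminus := by
  have hπ3 : (3:ℝ) < π := Real.pi_gt_three
  obtain ⟨α, β, h1, h2, hαb, hβb, hdich⟩ := mem_angles hq
  have hP1 : Pminus 1 = cpt (-(2*π/3)) := cpt_minus.symm
  have hP2 : Pminus 2 = cpt (2*π/3) := cpt_plus.symm
  have hd1 : dist (cpt α) (cpt (-(2*π/3))) < 1/10 := by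
    rw [← h1, ← hP1]
    exact lt_of_le_of_lt (dist_le_pi_dist q Pminus 1) hd
  have hd2 : dist (cpt β) (cpt (2*π/3)) < 1/10 := by
    rw [← h2, ← hP2]
    exact lt_of_le_of_lt (dist_le_pi_dist q Pminus 2) hd
  have ha : |α - -(2*π/3)| < 1/4 :=
    close_angle hαb (by rw [abs_neg, abs_of_pos (by positivity)]) hd1
  have hb : |β - 2*π/3| < 1/4 :=
    close_angle hβb (by rw [abs_of_pos (by positivity)]) hd2
  have ha' := abs_lt.1 ha
  have hb' := abs_lt.1 hb
  rcases hdich with hsmall | hcorner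
  · exfalso
    rw [abs_div, show |(2:ℝ)| = 2 by norm_num] at hsmall
    have : |α - β| ≤ 2*π/3 := by linarith
    have := abs_le.1 this
    linarith [this.1]
  · have h4 : |α - β| = 4*π/3 := by
      rw [abs_div, show |(2:ℝ)| = 2 by norm_num] at hcorner
      linarith
    rcases (abs_eq (by positivity : (0:ℝ) ≤ 4*π/3)).1 h4 with hpm | hpm
    · exfalso
      linarith
    · have hαl := abs_le.1 hαb
      have hβl := abs_le.1 hβb
      have hαv : α = -(2*π/3) := by linarith [hαl.1, hβl.2]
      have hβv : β = 2*π/3 := by linarith [hαl.1, hβl.2]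
      exact corner_force_minus hq (by rw [h1, hαv]) (by rw [h2, hβv])

lemma BH_mem : cfg 0 0 1 1 1 ∈ HstarPinnedConfig :=
  cfg_mem (by norm_num) (by norm_num) (by norm_num) (by norm_num) (by norm_num) (by norm_num)

lemma BH_in_Scomp : cfg 0 0 1 1 1 ∈ Scomp := by
  refine ⟨BH_mem, ne_corner (α := 0) (β := 0) rfl rfl ?_ ?_ ?_⟩ <;>
    (simp; positivity)

lemma scomp_pathconn : IsPathConnected Scomp := by
  refine ⟨cfg 0 0 1 1 1, BH_in_Scomp, ?_⟩
  intro y hy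
  rcases hstar_main hy.1 with h | h | h
  · exact absurd (by rw [h]; exact Set.mem_insert _ _) hy.2
  · exact absurd (by rw [h]; exact Set.mem_insert_iff.2 (Or.inr rfl)) hy.2
  · exact h.symm

lemma Pplus_ne_Pminus : Pplus ≠ Pminus := by
  intro h
  have h1 := congrArg (· 1) (congrFun h 1)
  have : (3/2 : ℝ) = -(3/2) := h1
  norm_num at this

lemma BH_ne_Pplus : cfg 0 0 1 1 1 ≠ Pplus := by
  intro h
  have h1 := congrArg (· 1) (congrFun h 1)
  have : Real.sqrt 3 * Real.sin 0 = 3/2 := h1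
  rw [Real.sin_zero, mul_zero] at this
  norm_num at this

lemma BH_ne_Pminus : cfg 0 0 1 1 1 ≠ Pminus := by
  intro h
  have h1 := congrArg (· 1) (congrFun h 1)
  have : Real.sqrt 3 * Real.sin 0 = -(3/2) := h1
  rw [Real.sin_zero, mul_zero] at this
  norm_num at this

theorem hstar_card : Nat.card (ConnectedComponents HstarPinnedConfig) = 3 := by
  set X := HstarPinnedConfig with hX
  let xP : ↥X := ⟨Pplus, Pplus_mem⟩
  let xM : ↥X := ⟨Pminus, Pminus_mem⟩
  let xB : ↥X := ⟨cfg 0 0 1 1 1, BH_mem⟩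
  -- open singletons at the two isolated points
  have hopenP : IsOpen ({xP} : Set ↥X) := by
    have he : ({xP} : Set ↥X) = Subtype.val ⁻¹' (Metric.ball Pplus (1/10)) := by
      ext z
      simp only [Set.mem_singleton_iff, Set.mem_preimage, Metric.mem_ball]
      constructor
      · intro h; rw [h]; simpa [xP, xM] using (by norm_num : (0:ℝ) < 1/10)
      · intro h
        exact Subtype.ext (isolated_plus z.2 h)
    rw [he]
    exact Metric.isOpen_ball.preimage continuous_subtype_val
  have hopenM : IsOpen ({xM} : Set ↥X) := by
    have he : ({xM} : Set ↥X) = Subtype.val ⁻¹' (Metric.ball Pminus (1/10)) := by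
      ext z
      simp only [Set.mem_singleton_iff, Set.mem_preimage, Metric.mem_ball]
      constructor
      · intro h; rw [h]; simpa [xP, xM] using (by norm_num : (0:ℝ) < 1/10)
      · intro h
        exact Subtype.ext (isolated_minus z.2 h)
    rw [he]
    exact Metric.isOpen_ball.preimage continuous_subtype_val
  have hclopenP : IsClopen ({xP} : Set ↥X) := ⟨isClosed_singleton, hopenP⟩
  have hclopenM : IsClopen ({xM} : Set ↥X) := ⟨isClosed_singleton, hopenM⟩
  have hcompP : connectedComponent xP = {xP} :=
    Set.Subset.antisymm (hclopenP.connectedComponent_subset rfl)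
      (Set.singleton_subset_iff.2 mem_connectedComponent)
  have hcompM : connectedComponent xM = {xM} :=
    Set.Subset.antisymm (hclopenM.connectedComponent_subset rfl)
      (Set.singleton_subset_iff.2 mem_connectedComponent)
  -- the big component
  set U : Set ↥X := Subtype.val ⁻¹' Scomp with hU
  have hUmem : ∀ z : ↥X, z ∈ U ↔ (z.1 ∉ ({Pplus, Pminus} : Set (Fin 7 → E2))) := by
    intro z
    constructor
    · intro h; exact h.2
    · intro h; exact ⟨z.2, h⟩
  have hUconn : IsPreconnected U := by
    have himg : Subtype.val '' U = Scomp := by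
      rw [hU, Subtype.image_preimage_coe]
      exact Set.inter_eq_right.2 (fun y hy => hy.1)
    have := (Topology.IsInducing.subtypeVal (t := X)).isPreconnected_image (s := U)
    rw [himg] at this
    exact this.1 scomp_pathconn.isConnected.isPreconnected
  have hBU : xB ∈ U := BH_in_Scomp
  -- classification of components
  have hclass : ∀ z : ↥X, ConnectedComponents.mk z = ConnectedComponents.mk xP ∨
      ConnectedComponents.mk z = ConnectedComponents.mk xM ∨
      ConnectedComponents.mk z = ConnectedComponents.mk xB := by
    intro z
    rcases hstar_main z.2 with h | h | h
    · left; exact congrArg _ (Subtype.ext h)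
    · right; left; exact congrArg _ (Subtype.ext h)
    · right; right
      have hzU : z ∈ U := h.source_mem
      rw [ConnectedComponents.coe_eq_coe]
      exact connectedComponent_eq ((hUconn.subset_connectedComponent hzU) hBU)
  have hPM : ConnectedComponents.mk xP ≠ ConnectedComponents.mk xM := by
    intro h
    rw [ConnectedComponents.coe_eq_coe, hcompP, hcompM] at h
    exact Pplus_ne_Pminus (Subtype.ext_iff.1 (Set.singleton_eq_singleton_iff.1 h))
  have hBP : ConnectedComponents.mk xB ≠ ConnectedComponents.mk xP := by
    intro h
    rw [ConnectedComponents.coe_eq_coe, hcompP] at h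
    have : xB ∈ ({xP} : Set ↥X) := h ▸ mem_connectedComponent
    exact BH_ne_Pplus (Subtype.ext_iff.1 this)
  have hBM : ConnectedComponents.mk xB ≠ ConnectedComponents.mk xM := by
    intro h
    rw [ConnectedComponents.coe_eq_coe, hcompM] at h
    have : xB ∈ ({xM} : Set ↥X) := h ▸ mem_connectedComponent
    exact BH_ne_Pminus (Subtype.ext_iff.1 this)
  let f : Fin 3 → ConnectedComponents ↥X :=
    ![ConnectedComponents.mk xP, ConnectedComponents.mk xM, ConnectedComponents.mk xB]
  have hbij : Function.Bijective f := by
    constructor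
    · intro i j hij
      fin_cases i <;> fin_cases j <;>
        simp_all [f, hPM, hBP, hBM, hPM.symm, hBP.symm, hBM.symm]
    · intro c
      obtain ⟨z, rfl⟩ := ConnectedComponents.surjective_coe c
      rcases hclass z with h | h | h
      · exact ⟨0, h.symm⟩
      · exact ⟨1, h.symm⟩
      · exact ⟨2, h.symm⟩
  exact Nat.card_eq_of_equiv_fin (Equiv.ofBijective f hbij).symm

/-! ### The graph G★★ -/

noncomputable def qcfg (α β s₄ s₅ s₆ s₇ : ℝ) : Fin 8 → E2 :=
  ![cpt 0, cpt α, cpt β, pt 0 0,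
    apx (α/2) (α/2) s₄ (3/2), apx (β/2) (β/2) s₅ (3/2),
    apx ((α+β)/2) ((α-β)/2) s₆ (3/2), apx ((α+β)/2) ((α-β)/2) s₇ (Real.sqrt 2)]

@[simp] lemma qcfg_0 (α β a b c d : ℝ) : qcfg α β a b c d 0 = cpt 0 := rfl
@[simp] lemma qcfg_1 (α β a b c d : ℝ) : qcfg α β a b c d 1 = cpt α := rfl
@[simp] lemma qcfg_2 (α β a b c d : ℝ) : qcfg α β a b c d 2 = cpt β := rfl
@[simp] lemma qcfg_3 (α β a b c d : ℝ) : qcfg α β a b c d 3 = pt 0 0 := rfl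
@[simp] lemma qcfg_4 (α β a b c d : ℝ) : qcfg α β a b c d 4 = apx (α/2) (α/2) a (3/2) := rfl
@[simp] lemma qcfg_5 (α β a b c d : ℝ) : qcfg α β a b c d 5 = apx (β/2) (β/2) b (3/2) := rfl
@[simp] lemma qcfg_6 (α β a b c d : ℝ) :
    qcfg α β a b c d 6 = apx ((α+β)/2) ((α-β)/2) c (3/2) := rfl
@[simp] lemma qcfg_7 (α β a b c d : ℝ) :
    qcfg α β a b c d 7 = apx ((α+β)/2) ((α-β)/2) d (Real.sqrt 2) := rfl

lemma s2_sq : Real.sqrt 2 ^ 2 = 2 := Real.sq_sqrt (by norm_num)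

lemma qcfg_mem {α β s₄ s₅ s₆ s₇ : ℝ} (hs4 : s₄^2 = 1) (hs5 : s₅^2 = 1) (hs6 : s₆^2 = 1)
    (hs7 : s₇^2 = 1)
    (h1 : Real.sin (α/2)^2 ≤ 3/4) (h2 : Real.sin (β/2)^2 ≤ 3/4)
    (h3 : Real.sin ((α-β)/2)^2 ≤ 2/3) :
    qcfg α β s₄ s₅ s₆ s₇ ∈ GstarstarPinnedConfig := by
  have hL : (0:ℝ) ≤ 3/2 := by norm_num
  have hL2 : (0:ℝ) ≤ Real.sqrt 2 := Real.sqrt_nonneg 2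
  have hb2 : 3 * Real.sin ((α-β)/2)^2 ≤ Real.sqrt 2 ^2 := by rw [s2_sq]; linarith
  refine ⟨zero_pt.symm, ?_, ?_, ?_, ?_, ?_, ?_, ?_, ?_, ?_, ?_, ?_, ?_⟩
  · show (cpt 0).ofLp = _
    rw [cpt_zero]; rfl
  · exact dist_cpt_pt00 0
  · exact dist_cpt_pt00 α
  · exact dist_cpt_pt00 β
  · show dist (cpt 0) (apx (α/2) (α/2) s₄ (3/2)) = 3/2
    rw [dist_comm]
    have := dist_apx_minus (μ := α/2) (δ := α/2) hL hs4 (by nlinarith)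
    rwa [show α/2 - α/2 = 0 by ring] at this
  · show dist (cpt 0) (apx (β/2) (β/2) s₅ (3/2)) = 3/2
    rw [dist_comm]
    have := dist_apx_minus (μ := β/2) (δ := β/2) hL hs5 (by nlinarith)
    rwa [show β/2 - β/2 = 0 by ring] at this
  · show dist (cpt α) (apx (α/2) (α/2) s₄ (3/2)) = 3/2
    rw [dist_comm]
    have := dist_apx_plus (μ := α/2) (δ := α/2) hL hs4 (by nlinarith)
    rwa [show α/2 + α/2 = α by ring] at this
  · show dist (cpt α) (apx ((α+β)/2) ((α-β)/2) s₆ (3/2)) = 3/2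
    rw [dist_comm]
    have := dist_apx_plus (μ := (α+β)/2) (δ := (α-β)/2) hL hs6 (by nlinarith)
    rwa [show (α+β)/2 + (α-β)/2 = α by ring] at this
  · show dist (cpt β) (apx (β/2) (β/2) s₅ (3/2)) = 3/2
    rw [dist_comm]
    have := dist_apx_plus (μ := β/2) (δ := β/2) hL hs5 (by nlinarith)
    rwa [show β/2 + β/2 = β by ring] at this
  · show dist (cpt β) (apx ((α+β)/2) ((α-β)/2) s₆ (3/2)) = 3/2
    rw [dist_comm]
    have := dist_apx_minus (μ := (α+β)/2) (δ := (α-β)/2) hL hs6 (by nlinarith)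
    rwa [show (α+β)/2 - (α-β)/2 = β by ring] at this
  · show dist (cpt α) (apx ((α+β)/2) ((α-β)/2) s₇ (Real.sqrt 2)) = Real.sqrt 2
    rw [dist_comm]
    have := dist_apx_plus (μ := (α+β)/2) (δ := (α-β)/2) hL2 hs7 hb2
    rwa [show (α+β)/2 + (α-β)/2 = α by ring] at this
  · show dist (cpt β) (apx ((α+β)/2) ((α-β)/2) s₇ (Real.sqrt 2)) = Real.sqrt 2
    rw [dist_comm]
    have := dist_apx_minus (μ := (α+β)/2) (δ := (α-β)/2) hL2 hs7 hb2
    rwa [show (α+β)/2 - (α-β)/2 = β by ring] at this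

lemma gupdate_apex4_mem {q : Fin 8 → E2} (hq : q ∈ GstarstarPinnedConfig) {x : E2}
    (h0 : dist (q 0) x = 3/2) (h1 : dist (q 1) x = 3/2) :
    Function.update q 4 x ∈ GstarstarPinnedConfig := by
  obtain ⟨c1, c2, c3, c4, c5, c6, c7, c8, c9, c10, c11, c12, c13⟩ := hq
  refine ⟨?_, ?_, ?_, ?_, ?_, ?_, ?_, ?_, ?_, ?_, ?_, ?_, ?_⟩ <;>
    simp only [Function.update_self, Function.update_of_ne (by decide : (3:Fin 8) ≠ 4),
      Function.update_of_ne (by decide : (0:Fin 8) ≠ 4),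
      Function.update_of_ne (by decide : (1:Fin 8) ≠ 4),
      Function.update_of_ne (by decide : (2:Fin 8) ≠ 4),
      Function.update_of_ne (by decide : (5:Fin 8) ≠ 4),
      Function.update_of_ne (by decide : (6:Fin 8) ≠ 4),
      Function.update_of_ne (by decide : (7:Fin 8) ≠ 4)] <;>
    assumption

lemma gupdate_apex5_mem {q : Fin 8 → E2} (hq : q ∈ GstarstarPinnedConfig) {x : E2}
    (h0 : dist (q 0) x = 3/2) (h1 : dist (q 2) x = 3/2) :
    Function.update q 5 x ∈ GstarstarPinnedConfig := by
  obtain ⟨c1, c2, c3, c4, c5, c6, c7, c8, c9, c10, c11, c12, c13⟩ := hq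
  refine ⟨?_, ?_, ?_, ?_, ?_, ?_, ?_, ?_, ?_, ?_, ?_, ?_, ?_⟩ <;>
    simp only [Function.update_self, Function.update_of_ne (by decide : (3:Fin 8) ≠ 5),
      Function.update_of_ne (by decide : (0:Fin 8) ≠ 5),
      Function.update_of_ne (by decide : (1:Fin 8) ≠ 5),
      Function.update_of_ne (by decide : (2:Fin 8) ≠ 5),
      Function.update_of_ne (by decide : (4:Fin 8) ≠ 5),
      Function.update_of_ne (by decide : (6:Fin 8) ≠ 5),
      Function.update_of_ne (by decide : (7:Fin 8) ≠ 5)] <;>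
    assumption

lemma gupdate_apex6_mem {q : Fin 8 → E2} (hq : q ∈ GstarstarPinnedConfig) {x : E2}
    (h0 : dist (q 1) x = 3/2) (h1 : dist (q 2) x = 3/2) :
    Function.update q 6 x ∈ GstarstarPinnedConfig := by
  obtain ⟨c1, c2, c3, c4, c5, c6, c7, c8, c9, c10, c11, c12, c13⟩ := hq
  refine ⟨?_, ?_, ?_, ?_, ?_, ?_, ?_, ?_, ?_, ?_, ?_, ?_, ?_⟩ <;>
    simp only [Function.update_self, Function.update_of_ne (by decide : (3:Fin 8) ≠ 6),
      Function.update_of_ne (by decide : (0:Fin 8) ≠ 6),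
      Function.update_of_ne (by decide : (1:Fin 8) ≠ 6),
      Function.update_of_ne (by decide : (2:Fin 8) ≠ 6),
      Function.update_of_ne (by decide : (4:Fin 8) ≠ 6),
      Function.update_of_ne (by decide : (5:Fin 8) ≠ 6),
      Function.update_of_ne (by decide : (7:Fin 8) ≠ 6)] <;>
    assumption

lemma gupdate_apex7_mem {q : Fin 8 → E2} (hq : q ∈ GstarstarPinnedConfig) {x : E2}
    (h0 : dist (q 1) x = Real.sqrt 2) (h1 : dist (q 2) x = Real.sqrt 2) :
    Function.update q 7 x ∈ GstarstarPinnedConfig := by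
  obtain ⟨c1, c2, c3, c4, c5, c6, c7, c8, c9, c10, c11, c12, c13⟩ := hq
  refine ⟨?_, ?_, ?_, ?_, ?_, ?_, ?_, ?_, ?_, ?_, ?_, ?_, ?_⟩ <;>
    simp only [Function.update_self, Function.update_of_ne (by decide : (3:Fin 8) ≠ 7),
      Function.update_of_ne (by decide : (0:Fin 8) ≠ 7),
      Function.update_of_ne (by decide : (1:Fin 8) ≠ 7),
      Function.update_of_ne (by decide : (2:Fin 8) ≠ 7),
      Function.update_of_ne (by decide : (4:Fin 8) ≠ 7),
      Function.update_of_ne (by decide : (5:Fin 8) ≠ 7),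
      Function.update_of_ne (by decide : (6:Fin 8) ≠ 7)] <;>
    assumption

lemma grotate4 {q : Fin 8 → E2} (hq : q ∈ GstarstarPinnedConfig) {x : E2} (hc : q 0 = q 1)
    (hx : dist (q 0) x = 3/2) :
    JoinedIn GstarstarPinnedConfig q (Function.update q 4 x) := by
  have h04 : dist (q 4) (q 0) = 3/2 := by
    rw [dist_comm]; exact hq.2.2.2.2.2.1
  obtain ⟨γ, hγc, hγ0, hγ1, hγd⟩ := circle_path h04
    (show dist x (q 0) = 3/2 by rw [dist_comm]; exact hx)
  have hj := joinedIn_update (S := GstarstarPinnedConfig) (p := q) (i := 4) hγc hγ0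
    (fun t _ => by
      refine gupdate_apex4_mem hq ?_ ?_
      · rw [dist_comm]; exact hγd t
      · rw [← hc, dist_comm]; exact hγd t)
  rwa [hγ1] at hj

lemma grotate5 {q : Fin 8 → E2} (hq : q ∈ GstarstarPinnedConfig) {x : E2} (hc : q 0 = q 2)
    (hx : dist (q 0) x = 3/2) :
    JoinedIn GstarstarPinnedConfig q (Function.update q 5 x) := by
  have h05 : dist (q 5) (q 0) = 3/2 := by
    rw [dist_comm]; exact hq.2.2.2.2.2.2.1
  obtain ⟨γ, hγc, hγ0, hγ1, hγd⟩ := circle_path h05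
    (show dist x (q 0) = 3/2 by rw [dist_comm]; exact hx)
  have hj := joinedIn_update (S := GstarstarPinnedConfig) (p := q) (i := 5) hγc hγ0
    (fun t _ => by
      refine gupdate_apex5_mem hq ?_ ?_
      · rw [dist_comm]; exact hγd t
      · rw [← hc, dist_comm]; exact hγd t)
  rwa [hγ1] at hj

lemma grotate6 {q : Fin 8 → E2} (hq : q ∈ GstarstarPinnedConfig) {x : E2} (hc : q 1 = q 2)
    (hx : dist (q 1) x = 3/2) :
    JoinedIn GstarstarPinnedConfig q (Function.update q 6 x) := by
  have h16 : dist (q 6) (q 1) = 3/2 := by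
    rw [dist_comm]; exact hq.2.2.2.2.2.2.2.2.1
  obtain ⟨γ, hγc, hγ0, hγ1, hγd⟩ := circle_path h16
    (show dist x (q 1) = 3/2 by rw [dist_comm]; exact hx)
  have hj := joinedIn_update (S := GstarstarPinnedConfig) (p := q) (i := 6) hγc hγ0
    (fun t _ => by
      refine gupdate_apex6_mem hq ?_ ?_
      · rw [dist_comm]; exact hγd t
      · rw [← hc, dist_comm]; exact hγd t)
  rwa [hγ1] at hj

lemma grotate7 {q : Fin 8 → E2} (hq : q ∈ GstarstarPinnedConfig) {x : E2} (hc : q 1 = q 2)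
    (hx : dist (q 1) x = Real.sqrt 2) :
    JoinedIn GstarstarPinnedConfig q (Function.update q 7 x) := by
  have h17 : dist (q 7) (q 1) = Real.sqrt 2 := by
    rw [dist_comm]; exact hq.2.2.2.2.2.2.2.2.2.2.2.1
  obtain ⟨γ, hγc, hγ0, hγ1, hγd⟩ := circle_path h17
    (show dist x (q 1) = Real.sqrt 2 by rw [dist_comm]; exact hx)
  have hj := joinedIn_update (S := GstarstarPinnedConfig) (p := q) (i := 7) hγc hγ0
    (fun t _ => by
      refine gupdate_apex7_mem hq ?_ ?_
      · rw [dist_comm]; exact hγd t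
      · rw [← hc, dist_comm]; exact hγd t)
  rwa [hγ1] at hj

lemma gstageB {α β s₄ s₅ s₆ s₇ : ℝ} (hs4 : s₄^2 = 1) (hs5 : s₅^2 = 1) (hs6 : s₆^2 = 1)
    (hs7 : s₇^2 = 1) (hα2 : |α/2| ≤ π/3) (hβ2 : |β/2| ≤ π/3) (hδ2 : |(α-β)/2| ≤ π/3)
    (hδ23 : Real.sin ((α-β)/2)^2 ≤ 2/3) :
    JoinedIn GstarstarPinnedConfig (qcfg α β s₄ s₅ s₆ s₇) (qcfg 0 0 s₄ s₅ s₆ s₇) := by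
  apply joinedIn_of (fun t => qcfg ((1-t)*α) ((1-t)*β) s₄ s₅ s₆ s₇)
  · apply continuous_pi
    intro j
    fin_cases j
    · exact continuous_const
    · exact continuous_cpt (by fun_prop)
    · exact continuous_cpt (by fun_prop)
    · exact continuous_const
    · exact continuous_apx (by fun_prop) (by fun_prop) _ _
    · exact continuous_apx (by fun_prop) (by fun_prop) _ _
    · exact continuous_apx (by fun_prop) (by fun_prop) _ _
    · exact continuous_apx (by fun_prop) (by fun_prop) _ _
  · show qcfg ((1-(0:ℝ))*α) ((1-(0:ℝ))*β) s₄ s₅ s₆ s₇ = qcfg α β s₄ s₅ s₆ s₇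
    rw [show (1-(0:ℝ))*α = α by ring, show (1-(0:ℝ))*β = β by ring]
  · show qcfg ((1-(1:ℝ))*α) ((1-(1:ℝ))*β) s₄ s₅ s₆ s₇ = qcfg 0 0 s₄ s₅ s₆ s₇
    rw [show (1-(1:ℝ))*α = 0 by ring, show (1-(1:ℝ))*β = 0 by ring]
  · intro t ht
    have h1t0 : (0:ℝ) ≤ 1 - t := by linarith [ht.2]
    have h1t1 : (1:ℝ) - t ≤ 1 := by linarith [ht.1]
    have b1 : Real.sin (((1-t)*α)/2)^2 ≤ 3/4 := by
      rw [show ((1-t)*α)/2 = (1-t)*(α/2) by ring]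
      exact le_trans (sin_sq_scale hα2 h1t0 h1t1) (sin_sq_le_of_le hα2)
    have b2 : Real.sin (((1-t)*β)/2)^2 ≤ 3/4 := by
      rw [show ((1-t)*β)/2 = (1-t)*(β/2) by ring]
      exact le_trans (sin_sq_scale hβ2 h1t0 h1t1) (sin_sq_le_of_le hβ2)
    have b3 : Real.sin (((1-t)*α - (1-t)*β)/2)^2 ≤ 2/3 := by
      rw [show ((1-t)*α - (1-t)*β)/2 = (1-t)*((α-β)/2) by ring]
      exact le_trans (sin_sq_scale hδ2 h1t0 h1t1) hδ23
    exact qcfg_mem hs4 hs5 hs6 hs7 b1 b2 b3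

lemma gstageC {s₄ s₅ s₆ s₇ : ℝ} (hs4 : s₄^2 = 1) (hs5 : s₅^2 = 1) (hs6 : s₆^2 = 1)
    (hs7 : s₇^2 = 1) :
    JoinedIn GstarstarPinnedConfig (qcfg 0 0 s₄ s₅ s₆ s₇) (qcfg 0 0 1 1 1 1) := by
  have L0 : (0:ℝ) ≤ 3/2 := by norm_num
  have L2 : (0:ℝ) ≤ Real.sqrt 2 := Real.sqrt_nonneg 2
  have mem : ∀ a b c d : ℝ, a^2 = 1 → b^2 = 1 → c^2 = 1 → d^2 = 1 →
      qcfg 0 0 a b c d ∈ GstarstarPinnedConfig := fun a b c d ha hb hc hd =>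
    qcfg_mem ha hb hc hd (by norm_num) (by norm_num) (by norm_num)
  have hb0 : 3 * Real.sin ((0:ℝ)/2)^2 ≤ (3/2:ℝ)^2 := by norm_num
  have d1 : ∀ s : ℝ, s^2 = 1 → dist (apx ((0:ℝ)/2) ((0:ℝ)/2) s (3/2)) (cpt 0) = 3/2 := by
    intro s hs
    have := dist_apx_minus (μ := (0:ℝ)/2) (δ := (0:ℝ)/2) L0 hs hb0
    rwa [show (0:ℝ)/2 - 0/2 = 0 by norm_num] at this
  have hb0' : 3 * Real.sin (((0:ℝ)-0)/2)^2 ≤ (3/2:ℝ)^2 := by norm_num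
  have d2 : ∀ s : ℝ, s^2 = 1 → dist (apx (((0:ℝ)+0)/2) (((0:ℝ)-0)/2) s (3/2)) (cpt 0) = 3/2 := by
    intro s hs
    have := dist_apx_plus (μ := ((0:ℝ)+0)/2) (δ := ((0:ℝ)-0)/2) L0 hs hb0'
    rwa [show ((0:ℝ)+0)/2 + ((0:ℝ)-0)/2 = 0 by norm_num] at this
  have hb0'' : 3 * Real.sin (((0:ℝ)-0)/2)^2 ≤ Real.sqrt 2 ^2 := by
    rw [s2_sq]; norm_num
  have d3 : ∀ s : ℝ, s^2 = 1 →
      dist (apx (((0:ℝ)+0)/2) (((0:ℝ)-0)/2) s (Real.sqrt 2)) (cpt 0) = Real.sqrt 2 := by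
    intro s hs
    have := dist_apx_plus (μ := ((0:ℝ)+0)/2) (δ := ((0:ℝ)-0)/2) L2 hs hb0''
    rwa [show ((0:ℝ)+0)/2 + ((0:ℝ)-0)/2 = 0 by norm_num] at this
  have j1 : JoinedIn GstarstarPinnedConfig (qcfg 0 0 s₄ s₅ s₆ s₇) (qcfg 0 0 1 s₅ s₆ s₇) := by
    have h := grotate4 (mem s₄ s₅ s₆ s₇ hs4 hs5 hs6 hs7) rfl
      (show dist (qcfg 0 0 s₄ s₅ s₆ s₇ 0) (apx ((0:ℝ)/2) ((0:ℝ)/2) 1 (3/2)) = 3/2 by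
        rw [qcfg_0, dist_comm]; exact d1 1 (by norm_num))
    rwa [show Function.update (qcfg 0 0 s₄ s₅ s₆ s₇) 4 (apx ((0:ℝ)/2) ((0:ℝ)/2) 1 (3/2))
        = qcfg 0 0 1 s₅ s₆ s₇ from by funext i; fin_cases i <;> rfl] at h
  have j2 : JoinedIn GstarstarPinnedConfig (qcfg 0 0 1 s₅ s₆ s₇) (qcfg 0 0 1 1 s₆ s₇) := by
    have h := grotate5 (mem 1 s₅ s₆ s₇ (by norm_num) hs5 hs6 hs7) rfl
      (show dist (qcfg 0 0 1 s₅ s₆ s₇ 0) (apx ((0:ℝ)/2) ((0:ℝ)/2) 1 (3/2)) = 3/2 by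
        rw [qcfg_0, dist_comm]; exact d1 1 (by norm_num))
    rwa [show Function.update (qcfg 0 0 1 s₅ s₆ s₇) 5 (apx ((0:ℝ)/2) ((0:ℝ)/2) 1 (3/2))
        = qcfg 0 0 1 1 s₆ s₇ from by funext i; fin_cases i <;> rfl] at h
  have j3 : JoinedIn GstarstarPinnedConfig (qcfg 0 0 1 1 s₆ s₇) (qcfg 0 0 1 1 1 s₇) := by
    have h := grotate6 (mem 1 1 s₆ s₇ (by norm_num) (by norm_num) hs6 hs7) rfl
      (show dist (qcfg 0 0 1 1 s₆ s₇ 1) (apx (((0:ℝ)+0)/2) (((0:ℝ)-0)/2) 1 (3/2)) = 3/2 by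
        rw [qcfg_1, dist_comm]; exact d2 1 (by norm_num))
    rwa [show Function.update (qcfg 0 0 1 1 s₆ s₇) 6 (apx (((0:ℝ)+0)/2) (((0:ℝ)-0)/2) 1 (3/2))
        = qcfg 0 0 1 1 1 s₇ from by funext i; fin_cases i <;> rfl] at h
  have j4 : JoinedIn GstarstarPinnedConfig (qcfg 0 0 1 1 1 s₇) (qcfg 0 0 1 1 1 1) := by
    have h := grotate7 (mem 1 1 1 s₇ (by norm_num) (by norm_num) (by norm_num) hs7) rfl
      (show dist (qcfg 0 0 1 1 1 s₇ 1)
          (apx (((0:ℝ)+0)/2) (((0:ℝ)-0)/2) 1 (Real.sqrt 2)) = Real.sqrt 2 by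
        rw [qcfg_1, dist_comm]; exact d3 1 (by norm_num))
    rwa [show Function.update (qcfg 0 0 1 1 1 s₇) 7
          (apx (((0:ℝ)+0)/2) (((0:ℝ)-0)/2) 1 (Real.sqrt 2))
        = qcfg 0 0 1 1 1 1 from by funext i; fin_cases i <;> rfl] at h
  exact ((j1.trans j2).trans j3).trans j4

set_option maxHeartbeats 4000000 in
lemma gstar_main {p : Fin 8 → E2} (hp : p ∈ GstarstarPinnedConfig) :
    JoinedIn GstarstarPinnedConfig p (qcfg 0 0 1 1 1 1) := by
  have hπ := Real.pi_pos
  have L0 : (0:ℝ) ≤ 3/2 := by norm_num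
  have L2 : (0:ℝ) ≤ Real.sqrt 2 := Real.sqrt_nonneg 2
  have L2' : (0:ℝ) < Real.sqrt 2 := Real.sqrt_pos.2 (by norm_num)
  obtain ⟨c1, c2, c3, c4, c5, c6, c7, c8, c9, c10, c11, c12, c13⟩ := hp
  have hp' : p ∈ GstarstarPinnedConfig :=
    ⟨c1, c2, c3, c4, c5, c6, c7, c8, c9, c10, c11, c12, c13⟩
  have hq0 : p 0 = cpt 0 := (congrArg (WithLp.toLp 2) c2).trans cpt_zero.symm
  have h13 : (p 1 0)^2 + (p 1 1)^2 = Real.sqrt 3 ^2 := by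
    have h := c4
    rw [c1, dist_e2_eq_iff (Real.sqrt_nonneg 3), zero_pt] at h
    simpa using h
  obtain ⟨α, hαπ, hα0, hα1⟩ := exists_angle (Real.sqrt_pos.2 (by norm_num)) h13
  have hp1 : p 1 = cpt α := e2_ext hα0 hα1
  have h23 : (p 2 0)^2 + (p 2 1)^2 = Real.sqrt 3 ^2 := by
    have h := c5
    rw [c1, dist_e2_eq_iff (Real.sqrt_nonneg 3), zero_pt] at h
    simpa using h
  obtain ⟨β, hβπ, hβ0, hβ1⟩ := exists_angle (Real.sqrt_pos.2 (by norm_num)) h23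
  have hp2 : p 2 = cpt β := e2_ext hβ0 hβ1
  have t1 : dist (p 0) (p 1) ≤ 3 := by
    calc dist (p 0) (p 1) ≤ dist (p 0) (p 4) + dist (p 4) (p 1) := dist_triangle _ _ _
      _ = 3 := by rw [c6, dist_comm, c8]; norm_num
  have t2 : dist (p 0) (p 2) ≤ 3 := by
    calc dist (p 0) (p 2) ≤ dist (p 0) (p 5) + dist (p 5) (p 2) := dist_triangle _ _ _
      _ = 3 := by rw [c7, dist_comm, c10]; norm_num
  have t3 : dist (p 1) (p 2) ≤ 2 * Real.sqrt 2 := by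
    calc dist (p 1) (p 2) ≤ dist (p 1) (p 7) + dist (p 7) (p 2) := dist_triangle _ _ _
      _ = 2 * Real.sqrt 2 := by rw [c12, dist_comm, c13]; ring
  have hsα : Real.sin (α/2)^2 ≤ 3/4 := by
    have hcs := chord_sq 0 α
    rw [← hq0, ← hp1, show (0 - α)/2 = -(α/2) by ring, Real.sin_neg, neg_sq] at hcs
    have hnn : (0:ℝ) ≤ dist (p 0) (p 1) := dist_nonneg
    generalize dist (p 0) (p 1) = D at t1 hcs hnn
    nlinarith
  have hsβ : Real.sin (β/2)^2 ≤ 3/4 := by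
    have hcs := chord_sq 0 β
    rw [← hq0, ← hp2, show (0 - β)/2 = -(β/2) by ring, Real.sin_neg, neg_sq] at hcs
    have hnn : (0:ℝ) ≤ dist (p 0) (p 2) := dist_nonneg
    generalize dist (p 0) (p 2) = D at t2 hcs hnn
    nlinarith
  have hsδ : Real.sin ((α-β)/2)^2 ≤ 2/3 := by
    have hcs := chord_sq α β
    rw [← hp1, ← hp2] at hcs
    have hnn : (0:ℝ) ≤ dist (p 1) (p 2) := dist_nonneg
    have h22 : (2 * Real.sqrt 2)^2 = 8 := by
      rw [mul_pow, s2_sq]; norm_num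
    generalize dist (p 1) (p 2) = D at t3 hcs hnn
    nlinarith [sq_nonneg (2 * Real.sqrt 2)]
  have hα2 : |α/2| ≤ π/3 := by
    apply angle_bound1 _ hsα
    rw [abs_div, show |(2:ℝ)| = 2 by norm_num]
    linarith
  have hβ2 : |β/2| ≤ π/3 := by
    apply angle_bound1 _ hsβ
    rw [abs_div, show |(2:ℝ)| = 2 by norm_num]
    linarith
  have hαb := abshalf hα2
  have hβb := abshalf hβ2
  have hδpre : |(α-β)/2| ≤ 2*π/3 := by
    rw [abs_div, show |(2:ℝ)| = 2 by norm_num]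
    have habs : |α - β| ≤ |α| + |β| := by
      calc |α - β| = |α + -β| := by rw [sub_eq_add_neg]
        _ ≤ |α| + |-β| := abs_add_le _ _
        _ = |α| + |β| := by rw [abs_neg]
    linarith
  have hδ2 : |(α-β)/2| ≤ π/3 := angle_bound3 hδpre hsδ
  -- target apex distances
  have hbα : 3 * Real.sin (α/2)^2 ≤ (3/2:ℝ)^2 := by nlinarith
  have hbβ : 3 * Real.sin (β/2)^2 ≤ (3/2:ℝ)^2 := by nlinarith
  have hbδ : 3 * Real.sin ((α-β)/2)^2 ≤ (3/2:ℝ)^2 := by nlinarith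
  have hbδ2 : 3 * Real.sin ((α-β)/2)^2 ≤ Real.sqrt 2 ^2 := by
    rw [s2_sq]; linarith
  have dA0 : ∀ s : ℝ, s^2 = 1 → dist (apx (α/2) (α/2) s (3/2)) (cpt 0) = 3/2 := by
    intro s hs
    have := dist_apx_minus (μ := α/2) (δ := α/2) L0 hs hbα
    rwa [show α/2 - α/2 = 0 by ring] at this
  have dAα : ∀ s : ℝ, s^2 = 1 → dist (apx (α/2) (α/2) s (3/2)) (cpt α) = 3/2 := by
    intro s hs
    have := dist_apx_plus (μ := α/2) (δ := α/2) L0 hs hbα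
    rwa [show α/2 + α/2 = α by ring] at this
  have dB0 : ∀ s : ℝ, s^2 = 1 → dist (apx (β/2) (β/2) s (3/2)) (cpt 0) = 3/2 := by
    intro s hs
    have := dist_apx_minus (μ := β/2) (δ := β/2) L0 hs hbβ
    rwa [show β/2 - β/2 = 0 by ring] at this
  have dBβ : ∀ s : ℝ, s^2 = 1 → dist (apx (β/2) (β/2) s (3/2)) (cpt β) = 3/2 := by
    intro s hs
    have := dist_apx_plus (μ := β/2) (δ := β/2) L0 hs hbβ
    rwa [show β/2 + β/2 = β by ring] at this
  have dCα : ∀ s : ℝ, s^2 = 1 → dist (apx ((α+β)/2) ((α-β)/2) s (3/2)) (cpt α) = 3/2 := by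
    intro s hs
    have := dist_apx_plus (μ := (α+β)/2) (δ := (α-β)/2) L0 hs hbδ
    rwa [show (α+β)/2 + (α-β)/2 = α by ring] at this
  have dCβ : ∀ s : ℝ, s^2 = 1 → dist (apx ((α+β)/2) ((α-β)/2) s (3/2)) (cpt β) = 3/2 := by
    intro s hs
    have := dist_apx_minus (μ := (α+β)/2) (δ := (α-β)/2) L0 hs hbδ
    rwa [show (α+β)/2 - (α-β)/2 = β by ring] at this
  have dDα : ∀ s : ℝ, s^2 = 1 →
      dist (apx ((α+β)/2) ((α-β)/2) s (Real.sqrt 2)) (cpt α) = Real.sqrt 2 := by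
    intro s hs
    have := dist_apx_plus (μ := (α+β)/2) (δ := (α-β)/2) L2 hs hbδ2
    rwa [show (α+β)/2 + (α-β)/2 = α by ring] at this
  have dDβ : ∀ s : ℝ, s^2 = 1 →
      dist (apx ((α+β)/2) ((α-β)/2) s (Real.sqrt 2)) (cpt β) = Real.sqrt 2 := by
    intro s hs
    have := dist_apx_minus (μ := (α+β)/2) (δ := (α-β)/2) L2 hs hbδ2
    rwa [show (α+β)/2 - (α-β)/2 = β by ring] at this
  -- step 4
  have step4 : ∃ s : ℝ, s^2 = 1 ∧
      JoinedIn GstarstarPinnedConfig p (Function.update p 4 (apx (α/2) (α/2) s (3/2))) := by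
    by_cases hdeg : α = 0
    · refine ⟨1, by norm_num, grotate4 hp' ?_ ?_⟩
      · rw [hq0, hp1, hdeg]
      · rw [hq0, dist_comm]; exact dA0 1 (by norm_num)
    · have habs1 : 0 < |α/2| := abs_pos.2 (div_ne_zero hdeg two_ne_zero)
      have habs2 : |α/2| < π := lt_of_le_of_lt hα2 (by linarith)
      have hsin : Real.sin (α/2) ≠ 0 := by
        have hpos := Real.sin_pos_of_pos_of_lt_pi habs1 habs2
        rw [sin_abs_eq habs2.le] at hpos
        intro hcon
        rw [hcon] at hpos
        simp at hpos
      obtain ⟨s, hs, hfix⟩ := apex_class (by norm_num : (0:ℝ) < 3/2) hsin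
        (show dist (p 4) (cpt (α/2 + α/2)) = 3/2 by
          rw [show α/2 + α/2 = α by ring, ← hp1, dist_comm]; exact c8)
        (show dist (p 4) (cpt (α/2 - α/2)) = 3/2 by
          rw [show α/2 - α/2 = 0 by ring, ← hq0, dist_comm]; exact c6)
      exact ⟨s, hs, by rw [← hfix, Function.update_eq_self]; exact JoinedIn.refl hp'⟩
  obtain ⟨s₄, hs4, hj4⟩ := step4
  set q4 : Fin 8 → E2 := Function.update p 4 (apx (α/2) (α/2) s₄ (3/2)) with hq4def
  have hq4_0 : q4 0 = p 0 := Function.update_of_ne (by decide) _ _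
  have hq4_1 : q4 1 = p 1 := Function.update_of_ne (by decide) _ _
  have hq4_2 : q4 2 = p 2 := Function.update_of_ne (by decide) _ _
  have hq4_5 : q4 5 = p 5 := Function.update_of_ne (by decide) _ _
  have hq4_6 : q4 6 = p 6 := Function.update_of_ne (by decide) _ _
  have hq4_7 : q4 7 = p 7 := Function.update_of_ne (by decide) _ _
  have hq4mem : q4 ∈ GstarstarPinnedConfig := gupdate_apex4_mem hp'
    (by rw [hq0, dist_comm]; exact dA0 s₄ hs4) (by rw [hp1, dist_comm]; exact dAα s₄ hs4)
  -- step 5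
  have step5 : ∃ s : ℝ, s^2 = 1 ∧
      JoinedIn GstarstarPinnedConfig q4 (Function.update q4 5 (apx (β/2) (β/2) s (3/2))) := by
    by_cases hdeg : β = 0
    · refine ⟨1, by norm_num, grotate5 hq4mem ?_ ?_⟩
      · rw [hq4_0, hq4_2, hq0, hp2, hdeg]
      · rw [hq4_0, hq0, dist_comm]; exact dB0 1 (by norm_num)
    · have habs1 : 0 < |β/2| := abs_pos.2 (div_ne_zero hdeg two_ne_zero)
      have habs2 : |β/2| < π := lt_of_le_of_lt hβ2 (by linarith)
      have hsin : Real.sin (β/2) ≠ 0 := by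
        have hpos := Real.sin_pos_of_pos_of_lt_pi habs1 habs2
        rw [sin_abs_eq habs2.le] at hpos
        intro hcon
        rw [hcon] at hpos
        simp at hpos
      obtain ⟨s, hs, hfix⟩ := apex_class (by norm_num : (0:ℝ) < 3/2) hsin
        (show dist (q4 5) (cpt (β/2 + β/2)) = 3/2 by
          rw [show β/2 + β/2 = β by ring, hq4_5, ← hp2, dist_comm]; exact c10)
        (show dist (q4 5) (cpt (β/2 - β/2)) = 3/2 by
          rw [show β/2 - β/2 = 0 by ring, hq4_5, ← hq0, dist_comm]; exact c7)
      exact ⟨s, hs, by rw [← hfix, Function.update_eq_self]; exact JoinedIn.refl hq4mem⟩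
  obtain ⟨s₅, hs5, hj5⟩ := step5
  set q5 : Fin 8 → E2 := Function.update q4 5 (apx (β/2) (β/2) s₅ (3/2)) with hq5def
  have hq5_0 : q5 0 = p 0 := by
    rw [hq5def, Function.update_of_ne (by decide)]; exact hq4_0
  have hq5_1 : q5 1 = p 1 := by
    rw [hq5def, Function.update_of_ne (by decide)]; exact hq4_1
  have hq5_2 : q5 2 = p 2 := by
    rw [hq5def, Function.update_of_ne (by decide)]; exact hq4_2
  have hq5_4 : q5 4 = q4 4 := Function.update_of_ne (by decide) _ _
  have hq5_6 : q5 6 = p 6 := by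
    rw [hq5def, Function.update_of_ne (by decide)]; exact hq4_6
  have hq5_7 : q5 7 = p 7 := by
    rw [hq5def, Function.update_of_ne (by decide)]; exact hq4_7
  have hq5mem : q5 ∈ GstarstarPinnedConfig := gupdate_apex5_mem hq4mem
    (by rw [hq4_0, hq0, dist_comm]; exact dB0 s₅ hs5)
    (by rw [hq4_2, hp2, dist_comm]; exact dBβ s₅ hs5)
  -- step 6
  have step6 : ∃ s : ℝ, s^2 = 1 ∧ JoinedIn GstarstarPinnedConfig q5
      (Function.update q5 6 (apx ((α+β)/2) ((α-β)/2) s (3/2))) := by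
    by_cases hdeg : α = β
    · refine ⟨1, by norm_num, grotate6 hq5mem ?_ ?_⟩
      · rw [hq5_1, hq5_2, hp1, hp2, hdeg]
      · rw [hq5_1, hp1, dist_comm]; exact dCα 1 (by norm_num)
    · have hαβ : α - β ≠ 0 := sub_ne_zero.2 hdeg
      have habs1 : 0 < |(α-β)/2| := abs_pos.2 (div_ne_zero hαβ two_ne_zero)
      have habs2 : |(α-β)/2| < π := lt_of_le_of_lt hδ2 (by linarith)
      have hsin : Real.sin ((α-β)/2) ≠ 0 := by
        have hpos := Real.sin_pos_of_pos_of_lt_pi habs1 habs2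
        rw [sin_abs_eq habs2.le] at hpos
        intro hcon
        rw [hcon] at hpos
        simp at hpos
      obtain ⟨s, hs, hfix⟩ := apex_class (by norm_num : (0:ℝ) < 3/2) hsin
        (show dist (q5 6) (cpt ((α+β)/2 + (α-β)/2)) = 3/2 by
          rw [show (α+β)/2 + (α-β)/2 = α by ring, hq5_6, ← hp1, dist_comm]; exact c9)
        (show dist (q5 6) (cpt ((α+β)/2 - (α-β)/2)) = 3/2 by
          rw [show (α+β)/2 - (α-β)/2 = β by ring, hq5_6, ← hp2, dist_comm]; exact c11)
      exact ⟨s, hs, by rw [← hfix, Function.update_eq_self]; exact JoinedIn.refl hq5mem⟩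
  obtain ⟨s₆, hs6, hj6⟩ := step6
  set q6 : Fin 8 → E2 := Function.update q5 6 (apx ((α+β)/2) ((α-β)/2) s₆ (3/2)) with hq6def
  have hq6_0 : q6 0 = p 0 := by
    rw [hq6def, Function.update_of_ne (by decide)]; exact hq5_0
  have hq6_1 : q6 1 = p 1 := by
    rw [hq6def, Function.update_of_ne (by decide)]; exact hq5_1
  have hq6_2 : q6 2 = p 2 := by
    rw [hq6def, Function.update_of_ne (by decide)]; exact hq5_2
  have hq6_4 : q6 4 = q4 4 := by
    rw [hq6def, Function.update_of_ne (by decide)]; exact hq5_4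
  have hq6_5 : q6 5 = q5 5 := Function.update_of_ne (by decide) _ _
  have hq6_7 : q6 7 = p 7 := by
    rw [hq6def, Function.update_of_ne (by decide)]; exact hq5_7
  have hq6mem : q6 ∈ GstarstarPinnedConfig := gupdate_apex6_mem hq5mem
    (by rw [hq5_1, hp1, dist_comm]; exact dCα s₆ hs6)
    (by rw [hq5_2, hp2, dist_comm]; exact dCβ s₆ hs6)
  -- step 7
  have step7 : ∃ s : ℝ, s^2 = 1 ∧ JoinedIn GstarstarPinnedConfig q6
      (Function.update q6 7 (apx ((α+β)/2) ((α-β)/2) s (Real.sqrt 2))) := by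
    by_cases hdeg : α = β
    · refine ⟨1, by norm_num, grotate7 hq6mem ?_ ?_⟩
      · rw [hq6_1, hq6_2, hp1, hp2, hdeg]
      · rw [hq6_1, hp1, dist_comm]; exact dDα 1 (by norm_num)
    · have hαβ : α - β ≠ 0 := sub_ne_zero.2 hdeg
      have habs1 : 0 < |(α-β)/2| := abs_pos.2 (div_ne_zero hαβ two_ne_zero)
      have habs2 : |(α-β)/2| < π := lt_of_le_of_lt hδ2 (by linarith)
      have hsin : Real.sin ((α-β)/2) ≠ 0 := by
        have hpos := Real.sin_pos_of_pos_of_lt_pi habs1 habs2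
        rw [sin_abs_eq habs2.le] at hpos
        intro hcon
        rw [hcon] at hpos
        simp at hpos
      obtain ⟨s, hs, hfix⟩ := apex_class L2' hsin
        (show dist (q6 7) (cpt ((α+β)/2 + (α-β)/2)) = Real.sqrt 2 by
          rw [show (α+β)/2 + (α-β)/2 = α by ring, hq6_7, ← hp1, dist_comm]; exact c12)
        (show dist (q6 7) (cpt ((α+β)/2 - (α-β)/2)) = Real.sqrt 2 by
          rw [show (α+β)/2 - (α-β)/2 = β by ring, hq6_7, ← hp2, dist_comm]; exact c13)
      exact ⟨s, hs, by rw [← hfix, Function.update_eq_self]; exact JoinedIn.refl hq6mem⟩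
  obtain ⟨s₇, hs7, hj7⟩ := step7
  set q7 : Fin 8 → E2 :=
    Function.update q6 7 (apx ((α+β)/2) ((α-β)/2) s₇ (Real.sqrt 2)) with hq7def
  have hq7eq : q7 = qcfg α β s₄ s₅ s₆ s₇ := by
    funext i
    fin_cases i
    · show q7 0 = cpt 0
      rw [hq7def, Function.update_of_ne (by decide), hq6_0]; exact hq0
    · show q7 1 = cpt α
      rw [hq7def, Function.update_of_ne (by decide), hq6_1]; exact hp1
    · show q7 2 = cpt β
      rw [hq7def, Function.update_of_ne (by decide), hq6_2]; exact hp2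
    · show q7 3 = pt 0 0
      rw [hq7def, Function.update_of_ne (by decide), hq6def,
        Function.update_of_ne (by decide), hq5def, Function.update_of_ne (by decide),
        hq4def, Function.update_of_ne (by decide)]
      exact c1.trans zero_pt
    · show q7 4 = apx (α/2) (α/2) s₄ (3/2)
      rw [hq7def, Function.update_of_ne (by decide), hq6_4, hq4def, Function.update_self]
    · show q7 5 = apx (β/2) (β/2) s₅ (3/2)
      rw [hq7def, Function.update_of_ne (by decide), hq6_5, hq5def, Function.update_self]
    · show q7 6 = apx ((α+β)/2) ((α-β)/2) s₆ (3/2)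
      rw [hq7def, Function.update_of_ne (by decide), hq6def, Function.update_self]
    · show q7 7 = apx ((α+β)/2) ((α-β)/2) s₇ (Real.sqrt 2)
      rw [hq7def, Function.update_self]
  have hchain : JoinedIn GstarstarPinnedConfig p (qcfg α β s₄ s₅ s₆ s₇) := by
    rw [← hq7eq]
    exact ((hj4.trans hj5).trans hj6).trans hj7
  exact (hchain.trans (gstageB hs4 hs5 hs6 hs7 hα2 hβ2 hδ2 hsδ)).trans
    (gstageC hs4 hs5 hs6 hs7)

lemma qB_mem : qcfg 0 0 1 1 1 1 ∈ GstarstarPinnedConfig :=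
  qcfg_mem (by norm_num) (by norm_num) (by norm_num) (by norm_num)
    (by norm_num) (by norm_num) (by norm_num)

lemma gstar_pathconn : IsPathConnected GstarstarPinnedConfig := by
  refine ⟨qcfg 0 0 1 1 1 1, qB_mem, ?_⟩
  intro y hy
  exact (gstar_main hy).symm

/-- **Example: a disconnected moduli space becoming connected after adding
edges.** The pinned configuration space `C_{v₄,v₁}(H★, h)` has exactly three
connected components, while the pinned configuration space
`C_{v₄,v₁}(G★★, l)` of the larger weighted graph is nonempty and connected. -/
theorem Hstar_three_components_Gstarstar_connected :
    Nat.card (ConnectedComponents HstarPinnedConfig) = 3 ∧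
    GstarstarPinnedConfig.Nonempty ∧ IsConnected GstarstarPinnedConfig :=
  ⟨hstar_card, ⟨qcfg 0 0 1 1 1 1, qB_mem⟩, gstar_pathconn.isConnected⟩
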